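/- arXiv:2203.03318 — 3 statements merged into one kernel-verified Lean document; each statement's English description precedes it below -/
import Mathlib

section
/- For every n ≥ 2: s_n^{M,N}(x) = γ_{n,n} p_n^{[2]}(x) + γ_{n−1,n} p_{n−1}^{[2]}(x) + γ_{n−2,n} p_{n−2}^{[2]}(x), where γ_{n,n} = t_n/r_n^{[2]} = (t_n/r_{n+1})·(K_{n+1}(c,c)/K_n(c,c))^{1/2}, γ_{n−1,n} = −(K_{n−1}(c,c)/K_n(c,c))^{1/2}·( d_{n−1}·t_n/r_n + e_{n−1}·(r_n/r_{n−1})·[ M·s_n^{M,N}(c)·p_{n−1}(c) + N·(s_n^{M,N})′(c)·p_{n−1}′(c) ] ), and γ_{n−2,n} = (r_{n−1}/t_n)·(K_{n−2}(c,c)/K_{n−1}(c,c))^{1/2}. -/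
open MeasureTheory Polynomial

/-- Squared norm `‖Q‖_μ² = ∫ Q(x)² dμ`. -/
noncomputable def nrmSq (μ : Measure ℝ) (Q : Polynomial ℝ) : ℝ := ∫ x, Q.eval x ^ 2 ∂μ

/-- Squared norm in the 2-iterated Christoffel measure `(x-c)² dμ`. -/
noncomputable def nrmSq2 (μ : Measure ℝ) (c : ℝ) (Q : Polynomial ℝ) : ℝ :=
  ∫ x, Q.eval x ^ 2 * (x - c) ^ 2 ∂μ

/-- Sobolev-type inner product `⟨f,g⟩_S = ∫ f g dμ + M f(c) g(c) + N f'(c) g'(c)`. -/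
noncomputable def ipS (μ : Measure ℝ) (c M N : ℝ) (f g : Polynomial ℝ) : ℝ :=
  (∫ x, f.eval x * g.eval x ∂μ) + M * (f.eval c * g.eval c)
    + N * ((derivative f).eval c * (derivative g).eval c)

/-- Leading coefficient `r_n = 1/‖P_n‖_μ` of the orthonormal polynomial `p_n`. -/
noncomputable def rC (μ : Measure ℝ) (P : ℕ → Polynomial ℝ) (n : ℕ) : ℝ :=
  1 / Real.sqrt (nrmSq μ (P n))

/-- Leading coefficient `r_n^{[2]} = 1/‖P_n^{[2]}‖_{[2]}`. -/
noncomputable def r2C (μ : Measure ℝ) (c : ℝ) (P2 : ℕ → Polynomial ℝ) (n : ℕ) : ℝ :=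
  1 / Real.sqrt (nrmSq2 μ c (P2 n))

/-- Orthonormal polynomial `p_n = P_n/‖P_n‖_μ`. -/
noncomputable def onP (μ : Measure ℝ) (P : ℕ → Polynomial ℝ) (n : ℕ) : Polynomial ℝ :=
  C (rC μ P n) * P n

/-- Orthonormal polynomial `p_n^{[2]} = P_n^{[2]}/‖P_n^{[2]}‖_{[2]}`. -/
noncomputable def onP2 (μ : Measure ℝ) (c : ℝ) (P2 : ℕ → Polynomial ℝ) (n : ℕ) : Polynomial ℝ :=
  C (r2C μ c P2 n) * P2 n

/-- Leading coefficient `t_n = 1/‖S_n^{M,N}‖_S` of the Sobolev-type orthonormal polynomial. -/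
noncomputable def tC (μ : Measure ℝ) (c M N : ℝ) (S : ℕ → Polynomial ℝ) (n : ℕ) : ℝ :=
  1 / Real.sqrt (ipS μ c M N (S n) (S n))

/-- Sobolev-type orthonormal polynomial `s_n^{M,N} = S_n^{M,N}/‖S_n^{M,N}‖_S`. -/
noncomputable def sN (μ : Measure ℝ) (c M N : ℝ) (S : ℕ → Polynomial ℝ) (n : ℕ) : Polynomial ℝ :=
  C (tC μ c M N S n) * S n

/-- Diagonal kernel value `K_n(c,c) = Σ_{j=0}^n P_j(c)²/‖P_j‖_μ²`. -/
noncomputable def Kcc (μ : Measure ℝ) (P : ℕ → Polynomial ℝ) (c : ℝ) (n : ℕ) : ℝ :=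
  ∑ j ∈ Finset.range (n + 1), (P j).eval c ^ 2 / nrmSq μ (P j)

/-- Kernel `K_n^{(0,j)}(x,c)` as a polynomial in `x`:
`Σ_{k=0}^n (d/dy)^j P_k(y)|_{y=c} · P_k(x)/‖P_k‖_μ²`. -/
noncomputable def Kpoly (μ : Measure ℝ) (P : ℕ → Polynomial ℝ) (c : ℝ) (n j : ℕ) : Polynomial ℝ :=
  ∑ k ∈ Finset.range (n + 1), C ((derivative^[j] (P k)).eval c / nrmSq μ (P k)) * P k

/-- Mixed derivative of the kernel at the diagonal:
`K_n^{(i,j)}(c,c) = Σ_{k=0}^n P_k^{(i)}(c) P_k^{(j)}(c)/‖P_k‖_μ²`. -/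
noncomputable def Kder (μ : Measure ℝ) (P : ℕ → Polynomial ℝ) (c : ℝ) (n i j : ℕ) : ℝ :=
  ∑ k ∈ Finset.range (n + 1),
    (derivative^[i] (P k)).eval c * (derivative^[j] (P k)).eval c / nrmSq μ (P k)

/-- Connection coefficient `d_n`. -/
noncomputable def dCoef (P : ℕ → Polynomial ℝ) (c : ℝ) (n : ℕ) : ℝ :=
  ((P (n + 2)).eval c * (derivative (P n)).eval c
      - (derivative (P (n + 2))).eval c * (P n).eval c) /
    ((P (n + 1)).eval c * (derivative (P n)).eval c
      - (derivative (P (n + 1))).eval c * (P n).eval c)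

/-- Connection coefficient `e_n`. -/
noncomputable def eCoef (P : ℕ → Polynomial ℝ) (c : ℝ) (n : ℕ) : ℝ :=
  ((P (n + 2)).eval c * (derivative (P (n + 1))).eval c
      - (derivative (P (n + 2))).eval c * (P (n + 1)).eval c) /
    ((P (n + 1)).eval c * (derivative (P n)).eval c
      - (derivative (P (n + 1))).eval c * (P n).eval c)

/-- Connection coefficient `γ_{j,n} = ⟨s_n^{M,N}, p_j^{[2]}⟩_{[2]}`. -/
noncomputable def gamC (μ : Measure ℝ) (c M N : ℝ) (S P2 : ℕ → Polynomial ℝ) (j n : ℕ) : ℝ :=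
  ∫ x, (sN μ c M N S n).eval x * (onP2 μ c P2 j).eval x * (x - c) ^ 2 ∂μ

/-- Jacobi matrix of `μ`: `J(n,m) = ∫ x p_n(x) p_m(x) dμ`. -/
noncomputable def Jmat (μ : Measure ℝ) (P : ℕ → Polynomial ℝ) (n m : ℕ) : ℝ :=
  ∫ x, x * ((onP μ P n).eval x * (onP μ P m).eval x) ∂μ

/-- Jacobi matrix of `(x-c)² dμ`: `J_{[2]}(n,m) = ∫ x p_n^{[2]}(x) p_m^{[2]}(x) (x-c)² dμ`. -/
noncomputable def J2mat (μ : Measure ℝ) (c : ℝ) (P2 : ℕ → Polynomial ℝ) (n m : ℕ) : ℝ :=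
  ∫ x, x * ((onP2 μ c P2 n).eval x * (onP2 μ c P2 m).eval x) * (x - c) ^ 2 ∂μ

/-- Five-diagonal matrix `H(n,m) = ⟨(x-c)² s_n^{M,N}, s_m^{M,N}⟩_S`. -/
noncomputable def Hmat (μ : Measure ℝ) (c M N : ℝ) (S : ℕ → Polynomial ℝ) (n m : ℕ) : ℝ :=
  ipS μ c M N ((X - C c) ^ 2 * sN μ c M N S n) (sN μ c M N S m)

/-- Kronecker delta. -/
noncomputable def kdel (n m : ℕ) : ℝ := if n = m then 1 else 0

namespace Stmt8Aux

/-- integral of a polynomial -/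
noncomputable def ipP (μ : Measure ℝ) (q : Polynomial ℝ) : ℝ := ∫ x, q.eval x ∂μ

variable {μ : Measure ℝ}

lemma intPoly (hmom : ∀ n : ℕ, Integrable (fun x : ℝ => x ^ n) μ) (q : Polynomial ℝ) :
    Integrable (fun x => q.eval x) μ := by
  induction q using Polynomial.induction_on' with
  | add p q hp hq => simp only [eval_add]; exact hp.add hq
  | monomial n a => simpa [eval_monomial] using (hmom n).const_mul a

variable (hmom : ∀ n : ℕ, Integrable (fun x : ℝ => x ^ n) μ)
include hmom

lemma ipP_add (q r : Polynomial ℝ) : ipP μ (q + r) = ipP μ q + ipP μ r := by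
  unfold ipP
  simp only [eval_add]
  exact integral_add (intPoly hmom q) (intPoly hmom r)

omit hmom in
lemma ipP_Cmul (a : ℝ) (q : Polynomial ℝ) : ipP μ (C a * q) = a * ipP μ q := by
  unfold ipP
  simp only [eval_mul, eval_C]
  exact integral_const_mul a _

lemma ipP_sub (q r : Polynomial ℝ) : ipP μ (q - r) = ipP μ q - ipP μ r := by
  have h : ipP μ (q - r) + ipP μ r = ipP μ q := by
    rw [← ipP_add hmom]; ring_nf
  linarith

lemma ipP_sum (s : Finset ℕ) (f : ℕ → Polynomial ℝ) :
    ipP μ (∑ j ∈ s, f j) = ∑ j ∈ s, ipP μ (f j) := by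
  classical
  induction s using Finset.induction_on with
  | empty => simp [ipP]
  | insert _ _ h ih =>
      rw [Finset.sum_insert h, Finset.sum_insert h, ipP_add hmom, ih]

omit hmom in
/-- Representation in a monic graded family. -/
lemma rep_exists (Q : ℕ → Polynomial ℝ) (hm : ∀ n, (Q n).Monic)
    (hd : ∀ n, (Q n).natDegree = n) :
    ∀ (m : ℕ) (q : Polynomial ℝ), q.natDegree ≤ m →
      ∃ a : ℕ → ℝ, q = ∑ j ∈ Finset.range (m + 1), C (a j) * Q j := by
  intro m
  induction m with
  | zero =>
      intro q hq
      refine ⟨fun _ => q.coeff 0, ?_⟩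
      have h0 : Q 0 = 1 := (hm 0).natDegree_eq_zero.mp (hd 0)
      rw [Finset.sum_range_one, h0, mul_one]
      exact (Polynomial.eq_C_of_natDegree_le_zero hq).trans rfl
  | succ m ih =>
      intro q hq
      set q' := q - C (q.coeff (m + 1)) * Q (m + 1) with hq'
      have hdeg : q'.natDegree ≤ m := by
        rw [natDegree_le_iff_coeff_eq_zero]
        intro k hk
        have hk1 : m + 1 ≤ k := hk
        rcases eq_or_lt_of_le hk1 with h | h
        · have hQ : (Q (m+1)).coeff (m+1) = 1 := by
            have h1 := (hm (m+1)).coeff_natDegree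
            rwa [hd (m+1)] at h1
          subst h
          simp [hq', coeff_sub, coeff_C_mul, hQ]
        · have h1 : q.coeff k = 0 := coeff_eq_zero_of_natDegree_lt (lt_of_le_of_lt hq h)
          have h2 : (Q (m+1)).coeff k = 0 := coeff_eq_zero_of_natDegree_lt (by rw [hd]; exact h)
          simp [hq', coeff_sub, coeff_C_mul, h1, h2]
      obtain ⟨a, ha⟩ := ih q' hdeg
      refine ⟨fun j => if j = m + 1 then q.coeff (m + 1) else a j, ?_⟩
      rw [Finset.sum_range_succ]
      have hco : ∑ j ∈ Finset.range (m + 1),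
          C (if j = m + 1 then q.coeff (m + 1) else a j) * Q j
          = ∑ j ∈ Finset.range (m + 1), C (a j) * Q j := by
        apply Finset.sum_congr rfl
        intro j hj
        rw [if_neg (by simp at hj; omega)]
      rw [hco, ← ha, hq']
      simp

lemma ipP_w_expand (w f : Polynomial ℝ) (s : Finset ℕ) (a : ℕ → ℝ) (Q : ℕ → Polynomial ℝ) :
    ipP μ (w * (f * ∑ j ∈ s, C (a j) * Q j)) = ∑ j ∈ s, a j * ipP μ (w * (f * Q j)) := by
  have h1 : w * (f * ∑ j ∈ s, C (a j) * Q j) = ∑ j ∈ s, C (a j) * (w * (f * Q j)) := by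
    rw [Finset.mul_sum, Finset.mul_sum]
    exact Finset.sum_congr rfl fun j _ => by ring
  rw [h1, ipP_sum hmom]
  exact Finset.sum_congr rfl fun j _ => ipP_Cmul _ _

/-- Orthogonality against lower-degree polynomials. -/
lemma ip_lower (w : Polynomial ℝ) (Q : ℕ → Polynomial ℝ)
    (hm : ∀ n, (Q n).Monic) (hd : ∀ n, (Q n).natDegree = n)
    (hQo : ∀ i j, i ≠ j → ipP μ (w * (Q i * Q j)) = 0)
    (n : ℕ) (q : Polynomial ℝ) (hq : q = 0 ∨ q.natDegree < n) :
    ipP μ (w * (Q n * q)) = 0 := by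
  rcases hq with rfl | hq
  · simp [ipP]
  · have hn : 1 ≤ n := Nat.one_le_iff_ne_zero.mpr (by omega)
    obtain ⟨a, ha⟩ := rep_exists Q hm hd (n - 1) q (by omega)
    rw [ha, ipP_w_expand hmom]
    apply Finset.sum_eq_zero
    intro j hj
    simp only [Finset.mem_range] at hj
    rw [hQo n j (by omega)]
    ring

/-- Definiteness: orthogonal to the whole family up to its degree implies zero. -/
lemma zero_of_orth (w : Polynomial ℝ)
    (hw : ∀ q : Polynomial ℝ, q ≠ 0 → 0 < ipP μ (w * (q * q)))
    (Q : ℕ → Polynomial ℝ) (hm : ∀ n, (Q n).Monic) (hd : ∀ n, (Q n).natDegree = n)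
    (m : ℕ) (q : Polynomial ℝ) (hq : q.natDegree ≤ m)
    (h : ∀ j, j ≤ m → ipP μ (w * (Q j * q)) = 0) : q = 0 := by
  by_contra hne
  obtain ⟨a, ha⟩ := rep_exists Q hm hd m q hq
  have key : ipP μ (w * (q * q)) = 0 := by
    nth_rewrite 2 [ha]
    rw [show w * (q * ∑ j ∈ Finset.range (m+1), C (a j) * Q j)
        = w * ((∑ j ∈ Finset.range (m+1), C (a j) * Q j) * q) by ring]
    have : ∀ j ∈ Finset.range (m + 1), ipP μ (w * (Q j * q)) = 0 := by
      intro j hj; exact h j (by simpa using Nat.lt_succ_iff.mp (Finset.mem_range.mp hj))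
    calc ipP μ (w * ((∑ j ∈ Finset.range (m+1), C (a j) * Q j) * q))
        = ipP μ (w * (q * ∑ j ∈ Finset.range (m+1), C (a j) * Q j)) := by ring_nf
      _ = ∑ j ∈ Finset.range (m+1), a j * ipP μ (w * (q * Q j)) := ipP_w_expand hmom w q _ a Q
      _ = 0 := Finset.sum_eq_zero fun j hj => by
            rw [show w * (q * Q j) = w * (Q j * q) by ring, this j hj]; ring
  exact absurd key (ne_of_gt (hw q hne))

omit hmom in
lemma nrmSq_eq_ipP (Q : Polynomial ℝ) : nrmSq μ Q = ipP μ (1 * (Q * Q)) := by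
  unfold nrmSq ipP
  congr 1; funext x; simp [eval_mul]; ring

omit hmom in
lemma nrmSq2_eq_ipP (c : ℝ) (Q : Polynomial ℝ) :
    nrmSq2 μ c Q = ipP μ ((X - C c) ^ 2 * (Q * Q)) := by
  unfold nrmSq2 ipP
  congr 1; funext x; simp [eval_mul, eval_pow]; ring

omit hmom in
lemma pos_w_one (hpos : ∀ q : Polynomial ℝ, q ≠ 0 → 0 < ∫ x, q.eval x ^ 2 ∂μ) :
    ∀ q : Polynomial ℝ, q ≠ 0 → 0 < ipP μ ((1 : Polynomial ℝ) * (q * q)) := by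
  intro q hq
  have := hpos q hq
  have he : ipP μ ((1 : Polynomial ℝ) * (q * q)) = ∫ x, q.eval x ^ 2 ∂μ := by
    unfold ipP; congr 1; funext x; simp [eval_mul]; ring
  rwa [he]

omit hmom in
lemma pos_w_sq (hpos : ∀ q : Polynomial ℝ, q ≠ 0 → 0 < ∫ x, q.eval x ^ 2 ∂μ) (c : ℝ) :
    ∀ q : Polynomial ℝ, q ≠ 0 → 0 < ipP μ ((X - C c) ^ 2 * (q * q)) := by
  intro q hq
  have h0 : (X - C c) * q ≠ 0 := mul_ne_zero (X_sub_C_ne_zero c) hq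
  have := hpos _ h0
  have he : ipP μ ((X - C c) ^ 2 * (q * q)) = ∫ x, ((X - C c) * q).eval x ^ 2 ∂μ := by
    unfold ipP; congr 1; funext x; simp [eval_mul, eval_pow, eval_sub, eval_X, eval_C]; ring
  rwa [he]


omit hmom in
lemma nrmSq_pos (hpos : ∀ q : Polynomial ℝ, q ≠ 0 → 0 < ∫ x, q.eval x ^ 2 ∂μ)
    {Q : Polynomial ℝ} (hQ : Q ≠ 0) : 0 < nrmSq μ Q := hpos Q hQ

omit hmom in
lemma Kcc_pos (hpos : ∀ q : Polynomial ℝ, q ≠ 0 → 0 < ∫ x, q.eval x ^ 2 ∂μ)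
    {P : ℕ → Polynomial ℝ} (hPm : ∀ n, (P n).Monic) (hPd : ∀ n, (P n).natDegree = n)
    (c : ℝ) (n : ℕ) : 0 < Kcc μ P c n := by
  apply Finset.sum_pos'
  · intro j _
    exact div_nonneg (sq_nonneg _) (le_of_lt (nrmSq_pos hpos (hPm j).ne_zero))
  · refine ⟨0, Finset.mem_range.mpr (by omega), ?_⟩
    have h0 : P 0 = 1 := (hPm 0).natDegree_eq_zero.mp (hPd 0)
    rw [h0]
    simp only [eval_one, one_pow]
    exact div_pos one_pos (nrmSq_pos hpos one_ne_zero)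

/-- `P_n(c) ≠ 0` when `c` is a.e. below the support. -/
lemma evalc_ne_zero (hpos : ∀ q : Polynomial ℝ, q ≠ 0 → 0 < ∫ x, q.eval x ^ 2 ∂μ)
    {c : ℝ} (hc : ∀ᵐ x ∂μ, c < x)
    {P : ℕ → Polynomial ℝ} (hPm : ∀ n, (P n).Monic) (hPd : ∀ n, (P n).natDegree = n)
    (hPo : ∀ i j, i ≠ j → ipP μ (1 * (P i * P j)) = 0)
    (n : ℕ) : (P n).eval c ≠ 0 := by
  rcases Nat.eq_zero_or_pos n with rfl | hn
  · have h0 : P 0 = 1 := (hPm 0).natDegree_eq_zero.mp (hPd 0)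
    rw [h0]; simp
  intro h
  set Q := P n /ₘ (X - C c) with hQdef
  have hfac : (X - C c) * Q = P n := mul_divByMonic_eq_iff_isRoot.mpr h
  have hQne : Q ≠ 0 := by
    intro h0
    rw [h0, mul_zero] at hfac
    exact (hPm n).ne_zero hfac.symm
  have hQdeg : Q.natDegree = n - 1 := by
    rw [hQdef, natDegree_divByMonic _ (monic_X_sub_C c), hPd n, natDegree_X_sub_C]
  have horth : ipP μ (1 * (P n * Q)) = 0 :=
    ip_lower hmom 1 P hPm hPd hPo n Q (Or.inr (by omega))
  have heq : ipP μ (1 * (P n * Q)) = ∫ x, (x - c) * Q.eval x ^ 2 ∂μ := by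
    unfold ipP
    congr 1; funext x
    rw [← hfac]
    simp [eval_mul, eval_sub, eval_X, eval_C]; ring
  have hint : Integrable (fun x => (x - c) * Q.eval x ^ 2) μ := by
    have h1 := intPoly hmom ((X - C c) * (Q * Q))
    have h2 : (fun x => ((X - C c) * (Q * Q)).eval x) = fun x => (x - c) * Q.eval x ^ 2 := by
      funext x; simp only [eval_mul, eval_sub, eval_X, eval_C]; ring
    rwa [h2] at h1
  have hnn : 0 ≤ᵐ[μ] fun x => (x - c) * Q.eval x ^ 2 := by
    filter_upwards [hc] with x hx
    exact mul_nonneg (le_of_lt (sub_pos.mpr hx)) (sq_nonneg _)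
  have hz : ∫ x, (x - c) * Q.eval x ^ 2 ∂μ = 0 := by rw [← heq, horth]
  have hae : (fun x => (x - c) * Q.eval x ^ 2) =ᵐ[μ] 0 :=
    (integral_eq_zero_iff_of_nonneg_ae hnn hint).mp hz
  have hQae : (fun x => Q.eval x ^ 2) =ᵐ[μ] 0 := by
    filter_upwards [hae, hc] with x h1 h2
    have hxc : x - c ≠ 0 := ne_of_gt (sub_pos.mpr h2)
    have := h1
    simp only [Pi.zero_apply] at this ⊢
    exact (mul_eq_zero.mp this).resolve_left hxc
  have : ∫ x, Q.eval x ^ 2 ∂μ = 0 := by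
    rw [integral_congr_ae hQae]; simp
  exact absurd this (ne_of_gt (hpos Q hQne))


/-- Christoffel–Darboux identity at `c` (one variable evaluated). -/
lemma CD (hpos : ∀ q : Polynomial ℝ, q ≠ 0 → 0 < ∫ x, q.eval x ^ 2 ∂μ)
    {c : ℝ} (hc : ∀ᵐ x ∂μ, c < x)
    {P : ℕ → Polynomial ℝ} (hPm : ∀ n, (P n).Monic) (hPd : ∀ n, (P n).natDegree = n)
    (hPo : ∀ i j, i ≠ j → ipP μ (1 * (P i * P j)) = 0) (n : ℕ) :
    C ((P n).eval c) * P (n + 1) - C ((P (n + 1)).eval c) * P n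
      = (X - C c) * (∑ j ∈ Finset.range (n + 1),
          C (nrmSq μ (P n) * (P j).eval c / nrmSq μ (P j)) * P j) := by
  set L : Polynomial ℝ := C ((P n).eval c) * P (n + 1) - C ((P (n + 1)).eval c) * P n with hL
  have hLroot : L.IsRoot c := by
    simp only [IsRoot, hL, eval_sub, eval_mul, eval_C]; ring
  set Q := L /ₘ (X - C c) with hQdef
  have hfac : (X - C c) * Q = L := mul_divByMonic_eq_iff_isRoot.mpr hLroot
  have hLdeg : L.natDegree ≤ n + 1 := by
    refine le_trans (natDegree_sub_le _ _) (max_le ?_ ?_)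
    · exact le_trans (natDegree_C_mul_le _ _) (le_of_eq (hPd (n+1)))
    · exact le_trans (natDegree_C_mul_le _ _) (by rw [hPd]; omega)
  have hQdeg : Q.natDegree ≤ n := by
    rw [hQdef, natDegree_divByMonic _ (monic_X_sub_C c), natDegree_X_sub_C]
    omega
  set A := ipP μ Q with hA
  have hP0 : P 0 = 1 := (hPm 0).natDegree_eq_zero.mp (hPd 0)
  have key : ∀ j, j ≤ n → ipP μ (1 * (P j * Q)) = (P j).eval c * A := by
    intro j hj
    rcases Nat.eq_zero_or_pos j with rfl | hj1
    · rw [hP0]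
      rw [show (1 : Polynomial ℝ) * ((1 : Polynomial ℝ) * Q) = Q by ring]
      simp [hA]
    · set e := (P j).eval c with he
      set Dj := (P j - C e) /ₘ (X - C c) with hDj
      have hDroot : (P j - C e).IsRoot c := by simp [IsRoot, he]
      have hDfac : (X - C c) * Dj = P j - C e := mul_divByMonic_eq_iff_isRoot.mpr hDroot
      have hDdeg : Dj.natDegree ≤ j - 1 := by
        rw [hDj, natDegree_divByMonic _ (monic_X_sub_C c), natDegree_X_sub_C]
        have : (P j - C e).natDegree ≤ j := by
          refine le_trans (natDegree_sub_le _ _) (max_le (le_of_eq (hPd j)) ?_)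
          rw [natDegree_C]; omega
        omega
      have hPj : P j = (X - C c) * Dj + C e := by rw [hDfac]; ring
      have hsplit : (1 : Polynomial ℝ) * (P j * Q) = L * Dj + C e * Q := by
        rw [← hfac, hPj]; ring
      rw [hsplit, ipP_add hmom, ipP_Cmul]
      have hLD : ipP μ (L * Dj) = 0 := by
        have hsplit2 : L * Dj = C ((P n).eval c) * (1 * (P (n+1) * Dj))
            - C ((P (n+1)).eval c) * (1 * (P n * Dj)) := by rw [hL]; ring
        rw [hsplit2, ipP_sub hmom, ipP_Cmul, ipP_Cmul,
          ip_lower hmom 1 P hPm hPd hPo (n+1) Dj (Or.inr (by omega)),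
          ip_lower hmom 1 P hPm hPd hPo n Dj (Or.inr (by omega))]
        ring
      rw [hLD, hA]; ring
  have hnq : ∀ j, nrmSq μ (P j) ≠ 0 := fun j => ne_of_gt (nrmSq_pos hpos (hPm j).ne_zero)
  have hKexp : Q = ∑ j ∈ Finset.range (n + 1), C (A * (P j).eval c / nrmSq μ (P j)) * P j := by
    rw [← sub_eq_zero]
    apply zero_of_orth hmom 1 (pos_w_one hpos) P hPm hPd n
    · refine le_trans (natDegree_sub_le _ _) (max_le hQdeg ?_)
      apply natDegree_sum_le_of_forall_le
      intro j hj
      exact le_trans (natDegree_C_mul_le _ _)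
        (by rw [hPd]; exact Nat.lt_succ_iff.mp (Finset.mem_range.mp hj))
    · intro j hj
      rw [show (1 : Polynomial ℝ) * (P j * (Q - ∑ k ∈ Finset.range (n + 1),
            C (A * (P k).eval c / nrmSq μ (P k)) * P k))
          = 1 * (P j * Q) - 1 * (P j * ∑ k ∈ Finset.range (n + 1),
            C (A * (P k).eval c / nrmSq μ (P k)) * P k) by ring,
        ipP_sub hmom, key j hj, ipP_w_expand hmom]
      rw [Finset.sum_eq_single j]
      · rw [show (1 : Polynomial ℝ) * (P j * P j) = 1 * (P j * P j) by rfl]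
        rw [← nrmSq_eq_ipP]
        field_simp [hnq j]
        ring
      · intro k _ hk
        rw [hPo j k (fun hjk => hk hjk.symm)]
        ring
      · intro hnot
        exact absurd (Finset.mem_range.mpr (by omega)) hnot
  have hcoefL : L.coeff (n + 1) = (P n).eval c := by
    rw [hL, coeff_sub, coeff_C_mul, coeff_C_mul]
    have h1 : (P (n+1)).coeff (n+1) = 1 := by
      have := (hPm (n+1)).coeff_natDegree; rwa [hPd (n+1)] at this
    have h2 : (P n).coeff (n+1) = 0 :=
      coeff_eq_zero_of_natDegree_lt (by rw [hPd]; omega)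
    rw [h1, h2]; ring
  have hcoefQ : Q.coeff n = (P n).eval c := by
    have h := congrArg (fun p => p.coeff (n + 1)) hfac
    rw [sub_mul, coeff_sub, coeff_X_mul, coeff_C_mul,
      coeff_eq_zero_of_natDegree_lt (lt_of_le_of_lt hQdeg (by omega : n < n + 1)),
      hcoefL] at h
    rw [← h]; ring
  have hcoefQ2 : Q.coeff n = A * (P n).eval c / nrmSq μ (P n) := by
    rw [hKexp, finset_sum_coeff]
    rw [Finset.sum_eq_single n]
    · rw [coeff_C_mul]
      have h1 : (P n).coeff n = 1 := by
        have := (hPm n).coeff_natDegree; rwa [hPd n] at this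
      rw [h1]; ring
    · intro k hk hkn
      rw [coeff_C_mul, coeff_eq_zero_of_natDegree_lt (by
        rw [hPd]
        exact lt_of_le_of_ne (Nat.lt_succ_iff.mp (Finset.mem_range.mp hk)) hkn)]
      ring
    · intro hnot
      exact absurd (Finset.mem_range.mpr (by omega)) hnot
  have hAval : A = nrmSq μ (P n) := by
    have hne : (P n).eval c ≠ 0 := evalc_ne_zero hmom hpos hc hPm hPd hPo n
    have h := hcoefQ.symm.trans hcoefQ2
    have h2 : (P n).eval c * nrmSq μ (P n) = A * (P n).eval c := by
      nth_rewrite 1 [h]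
      rw [div_mul_cancel₀ _ (hnq n)]
    rw [mul_comm] at h2
    exact (mul_right_cancel₀ hne h2).symm
  rw [hAval] at hKexp
  rw [← hfac, hKexp]

/-- Confluent Christoffel–Darboux: Wronskian identity. -/
lemma CDder (hpos : ∀ q : Polynomial ℝ, q ≠ 0 → 0 < ∫ x, q.eval x ^ 2 ∂μ)
    {c : ℝ} (hc : ∀ᵐ x ∂μ, c < x)
    {P : ℕ → Polynomial ℝ} (hPm : ∀ n, (P n).Monic) (hPd : ∀ n, (P n).natDegree = n)
    (hPo : ∀ i j, i ≠ j → ipP μ (1 * (P i * P j)) = 0) (n : ℕ) :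
    (P n).eval c * (derivative (P (n + 1))).eval c
      - (P (n + 1)).eval c * (derivative (P n)).eval c
      = nrmSq μ (P n) * Kcc μ P c n := by
  have h := congrArg (fun p => (derivative p).eval c) (CD hmom hpos hc hPm hPd hPo n)
  simp only [derivative_sub, derivative_C_mul, derivative_mul, derivative_X, derivative_C,
    eval_sub, eval_mul, eval_add, eval_C, eval_X, eval_one, eval_zero, one_mul, mul_zero,
    zero_mul, sub_self, zero_add, add_zero, sub_zero] at h
  have hKeval : (∑ j ∈ Finset.range (n + 1),
      C (nrmSq μ (P n) * (P j).eval c / nrmSq μ (P j)) * P j).eval c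
      = nrmSq μ (P n) * Kcc μ P c n := by
    rw [eval_finset_sum, Kcc, Finset.mul_sum]
    apply Finset.sum_congr rfl
    intro j _
    rw [eval_mul, eval_C, sq]
    ring
  rw [hKeval] at h
  linarith

omit hmom in
lemma lower_or_zero {p q : Polynomial ℝ} {m : ℕ} (hp : p.Monic) (hq : q.Monic)
    (hpd : p.natDegree = m) (hqd : q.natDegree = m) :
    p - q = 0 ∨ (p - q).natDegree < m := by
  by_cases h : p = q
  · exact Or.inl (sub_eq_zero.mpr h)
  · right
    have hd : p.degree = q.degree := by
      rw [degree_eq_natDegree hp.ne_zero, degree_eq_natDegree hq.ne_zero, hpd, hqd]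
    have hlt := degree_sub_lt hd hp.ne_zero (by rw [hp.leadingCoeff, hq.leadingCoeff])
    rw [degree_eq_natDegree hp.ne_zero, hpd] at hlt
    exact (natDegree_lt_iff_degree_lt (sub_ne_zero.mpr h)).mpr hlt

/-- pairing of the `m`-th family member with any monic polynomial of degree `m`. -/
lemma ip_monic (w : Polynomial ℝ) (Q : ℕ → Polynomial ℝ)
    (hm : ∀ n, (Q n).Monic) (hd : ∀ n, (Q n).natDegree = n)
    (hQo : ∀ i j, i ≠ j → ipP μ (w * (Q i * Q j)) = 0)
    (m : ℕ) (q : Polynomial ℝ) (hq : q.Monic) (hqd : q.natDegree = m) :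
    ipP μ (w * (Q m * q)) = ipP μ (w * (Q m * Q m)) := by
  have hsplit : w * (Q m * q) = w * (Q m * Q m) + w * (Q m * (q - Q m)) := by ring
  have hlow : q - Q m = 0 ∨ (q - Q m).natDegree < m := lower_or_zero hq (hm m) hqd (hd m)
  rw [hsplit, ipP_add hmom, ip_lower hmom w Q hm hd hQo m (q - Q m) hlow, add_zero]

/-- The three-term connection `(x-c)² P2_m = P_{m+2} - d_m P_{m+1} + e_m P_m`. -/
lemma threeterm (hpos : ∀ q : Polynomial ℝ, q ≠ 0 → 0 < ∫ x, q.eval x ^ 2 ∂μ)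
    {c : ℝ} (hc : ∀ᵐ x ∂μ, c < x)
    {P : ℕ → Polynomial ℝ} (hPm : ∀ n, (P n).Monic) (hPd : ∀ n, (P n).natDegree = n)
    (hPo : ∀ i j, i ≠ j → ipP μ (1 * (P i * P j)) = 0)
    {P2 : ℕ → Polynomial ℝ} (hP2m : ∀ n, (P2 n).Monic) (hP2d : ∀ n, (P2 n).natDegree = n)
    (hP2o : ∀ i j, i ≠ j → ipP μ ((X - C c) ^ 2 * (P2 i * P2 j)) = 0)
    (m : ℕ) :
    (X - C c) ^ 2 * P2 m
      = P (m + 2) + C (-(dCoef P c m)) * P (m + 1) + C (eCoef P c m) * P m := by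
  have hnq : ∀ j, nrmSq μ (P j) ≠ 0 := fun j => ne_of_gt (nrmSq_pos hpos (hPm j).ne_zero)
  have hw2m : ((X - C c) ^ 2).Monic := (monic_X_sub_C c).pow 2
  have hHm : ((X - C c) ^ 2 * P2 m).Monic := hw2m.mul (hP2m m)
  have hHd : ((X - C c) ^ 2 * P2 m).natDegree = m + 2 := by
    rw [hw2m.natDegree_mul (hP2m m), hP2d m, natDegree_pow, natDegree_X_sub_C]
    omega
  set H : Polynomial ℝ := (X - C c) ^ 2 * P2 m with hH
  set G : Polynomial ℝ := H - P (m + 2) with hG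
  have hGlow : G = 0 ∨ G.natDegree < m + 2 :=
    lower_or_zero hHm (hPm (m+2)) hHd (hPd (m+2))
  have hGdeg : G.natDegree ≤ m + 1 := by
    rcases hGlow with h | h
    · rw [h]; simp
    · omega
  set α : ℝ := ipP μ (1 * (P (m+1) * G)) / nrmSq μ (P (m+1)) with hα
  set β : ℝ := ipP μ (1 * (P m * G)) / nrmSq μ (P m) with hβ
  have hGorth : ∀ j, j + 2 ≤ m + 1 → ipP μ (1 * (P j * G)) = 0 := by
    intro j hj
    have h1 : (1 : Polynomial ℝ) * (P j * G) = (X - C c) ^ 2 * (P2 m * P j)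
        - 1 * (P (m + 2) * P j) := by rw [hG, hH]; ring
    rw [h1, ipP_sub hmom,
      ip_lower hmom _ P2 hP2m hP2d hP2o m (P j) (Or.inr (by rw [hPd]; omega)),
      ip_lower hmom _ P hPm hPd hPo (m + 2) (P j) (Or.inr (by rw [hPd]; omega))]
    ring
  have hGrep : G = C α * P (m + 1) + C β * P m := by
    rw [← sub_eq_zero]
    apply zero_of_orth hmom 1 (pos_w_one hpos) P hPm hPd (m + 1)
    · refine le_trans (natDegree_sub_le _ _) (max_le hGdeg ?_)
      refine le_trans (natDegree_add_le _ _) (max_le ?_ ?_)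
      · exact le_trans (natDegree_C_mul_le _ _) (by rw [hPd])
      · exact le_trans (natDegree_C_mul_le _ _) (by rw [hPd]; omega)
    · intro j hj
      have hexp : (1 : Polynomial ℝ) * (P j * (G - (C α * P (m+1) + C β * P m)))
          = 1 * (P j * G) - C α * (1 * (P j * P (m+1))) - C β * (1 * (P j * P m)) := by
        ring
      rw [hexp, ipP_sub hmom, ipP_sub hmom, ipP_Cmul, ipP_Cmul]
      by_cases hj1 : j = m + 1
      · rw [hj1]
        rw [hPo (m+1) m (by omega), hα]
        have : ipP μ (1 * (P (m+1) * P (m+1))) = nrmSq μ (P (m+1)) :=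
          (nrmSq_eq_ipP (P (m+1))).symm
        rw [this, div_mul_cancel₀ _ (hnq (m+1))]
        ring
      · by_cases hj2 : j = m
        · rw [hj2]
          rw [hPo m (m+1) (by omega), hβ]
          have : ipP μ (1 * (P m * P m)) = nrmSq μ (P m) := (nrmSq_eq_ipP (P m)).symm
          rw [this, div_mul_cancel₀ _ (hnq m)]
          ring
        · have hjlt : j + 2 ≤ m + 1 := by omega
          rw [hGorth j hjlt, hPo j (m+1) (by omega), hPo j m (by omega)]
          ring
  have hHrep : H = P (m + 2) + C α * P (m + 1) + C β * P m := by
    rw [hG] at hGrep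
    linear_combination hGrep
  -- evaluations at c
  have heval : (P (m+2)).eval c + α * (P (m+1)).eval c + β * (P m).eval c = 0 := by
    have h := congrArg (fun p => p.eval c) hHrep
    simp only [hH, eval_add, eval_mul, eval_C, eval_pow, eval_sub, eval_X] at h
    rw [sub_self] at h
    simp at h
    linarith
  have hder : (derivative (P (m+2))).eval c + α * (derivative (P (m+1))).eval c
      + β * (derivative (P m)).eval c = 0 := by
    have h := congrArg (fun p => (derivative p).eval c) hHrep
    simp only [hH, derivative_add, derivative_mul, derivative_C_mul, derivative_pow,
      derivative_sub, derivative_X, derivative_C, eval_add, eval_mul, eval_C, eval_pow,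
      eval_sub, eval_X] at h
    rw [sub_self] at h
    simp at h
    linarith
  -- the Wronskian denominator
  set W : ℝ := (P (m+1)).eval c * (derivative (P m)).eval c
      - (derivative (P (m+1))).eval c * (P m).eval c with hW
  have hWval : W = -(nrmSq μ (P m) * Kcc μ P c m) := by
    have := CDder hmom hpos hc hPm hPd hPo m
    rw [hW]; linarith
  have hWne : W ≠ 0 := by
    rw [hWval]
    have h1 := nrmSq_pos hpos (hPm m).ne_zero
    have h2 := Kcc_pos hpos hPm hPd c m
    intro h; nlinarith
  have hαval : α = -(dCoef P c m) := by
    rw [dCoef, ← hW, ← neg_div, eq_div_iff hWne]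
    linear_combination (eval c (derivative (P m))) * heval - (eval c (P m)) * hder
  have hβval : β = eCoef P c m := by
    rw [eCoef, ← hW, eq_div_iff hWne]
    linear_combination (eval c (P (m+1))) * hder - (eval c (derivative (P (m+1)))) * heval
  rw [hHrep, hαval, hβval]


lemma eCoef_val (hpos : ∀ q : Polynomial ℝ, q ≠ 0 → 0 < ∫ x, q.eval x ^ 2 ∂μ)
    {c : ℝ} (hc : ∀ᵐ x ∂μ, c < x)
    {P : ℕ → Polynomial ℝ} (hPm : ∀ n, (P n).Monic) (hPd : ∀ n, (P n).natDegree = n)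
    (hPo : ∀ i j, i ≠ j → ipP μ (1 * (P i * P j)) = 0) (m : ℕ) :
    eCoef P c m = nrmSq μ (P (m + 1)) * Kcc μ P c (m + 1)
      / (nrmSq μ (P m) * Kcc μ P c m) := by
  have h1 := CDder hmom hpos hc hPm hPd hPo m
  have h2 := CDder hmom hpos hc hPm hPd hPo (m + 1)
  rw [eCoef]
  have hden : (P (m + 1)).eval c * (derivative (P m)).eval c
      - (derivative (P (m + 1))).eval c * (P m).eval c
      = -(nrmSq μ (P m) * Kcc μ P c m) := by linarith
  have hnum : (P (m + 2)).eval c * (derivative (P (m + 1))).eval c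
      - (derivative (P (m + 2))).eval c * (P (m + 1)).eval c
      = -(nrmSq μ (P (m + 1)) * Kcc μ P c (m + 1)) := by linarith
  rw [hnum, hden, neg_div_neg_eq]

omit hmom in
lemma nrmSq_eq_ipP' (Q : Polynomial ℝ) : nrmSq μ Q = ipP μ (Q * Q) := by
  unfold nrmSq ipP
  congr 1; funext x; rw [eval_mul, sq]

lemma nrmSq2_formula (hpos : ∀ q : Polynomial ℝ, q ≠ 0 → 0 < ∫ x, q.eval x ^ 2 ∂μ)
    {c : ℝ} (hc : ∀ᵐ x ∂μ, c < x)
    {P : ℕ → Polynomial ℝ} (hPm : ∀ n, (P n).Monic) (hPd : ∀ n, (P n).natDegree = n)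
    (hPo : ∀ i j, i ≠ j → ipP μ (1 * (P i * P j)) = 0)
    {P2 : ℕ → Polynomial ℝ} (hP2m : ∀ n, (P2 n).Monic) (hP2d : ∀ n, (P2 n).natDegree = n)
    (hP2o : ∀ i j, i ≠ j → ipP μ ((X - C c) ^ 2 * (P2 i * P2 j)) = 0)
    (m : ℕ) :
    nrmSq2 μ c (P2 m) = nrmSq μ (P (m + 1)) * Kcc μ P c (m + 1) / Kcc μ P c m := by
  have hT := threeterm hmom hpos hc hPm hPd hPo hP2m hP2d hP2o m
  have h0 : nrmSq2 μ c (P2 m) = ipP μ ((X - C c) ^ 2 * (P2 m * P2 m)) :=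
    nrmSq2_eq_ipP c (P2 m)
  have hsplit : (X - C c) ^ 2 * (P2 m * P2 m)
      = 1 * (P (m + 2) * P2 m) + C (-(dCoef P c m)) * (1 * (P (m + 1) * P2 m))
        + C (eCoef P c m) * (1 * (P m * P2 m)) := by
    calc (X - C c) ^ 2 * (P2 m * P2 m) = ((X - C c) ^ 2 * P2 m) * P2 m := by ring
      _ = (P (m + 2) + C (-(dCoef P c m)) * P (m + 1) + C (eCoef P c m) * P m) * P2 m := by
          rw [hT]
      _ = _ := by ring
  rw [h0, hsplit, ipP_add hmom, ipP_add hmom, ipP_Cmul, ipP_Cmul,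
    ip_lower hmom 1 P hPm hPd hPo (m + 2) (P2 m) (Or.inr (by rw [hP2d]; omega)),
    ip_lower hmom 1 P hPm hPd hPo (m + 1) (P2 m) (Or.inr (by rw [hP2d]; omega)),
    ip_monic hmom 1 P hPm hPd hPo m (P2 m) (hP2m m) (hP2d m),
    ← nrmSq_eq_ipP, eCoef_val hmom hpos hc hPm hPd hPo m]
  have hKm : Kcc μ P c m ≠ 0 := ne_of_gt (Kcc_pos hpos hPm hPd c m)
  have hnqm : nrmSq μ (P m) ≠ 0 := ne_of_gt (nrmSq_pos hpos (hPm m).ne_zero)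
  field_simp
  ring

omit hmom in
lemma ipS_eq {c M N : ℝ} (f g : Polynomial ℝ) :
    ipS μ c M N f g = ipP μ (f * g) + M * (f.eval c * g.eval c)
      + N * ((derivative f).eval c * (derivative g).eval c) := by
  unfold ipS ipP
  congr 2
  congr 1; funext x; rw [eval_mul]

lemma ipS_sum {c M N : ℝ} (f : Polynomial ℝ) (s : Finset ℕ) (a : ℕ → ℝ)
    (Q : ℕ → Polynomial ℝ) :
    ipS μ c M N f (∑ j ∈ s, C (a j) * Q j) = ∑ j ∈ s, a j * ipS μ c M N f (Q j) := by
  simp only [ipS_eq]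
  rw [show f * (∑ j ∈ s, C (a j) * Q j) = ∑ j ∈ s, C (a j) * (f * Q j) by
    rw [Finset.mul_sum]; exact Finset.sum_congr rfl fun j _ => by ring]
  rw [ipP_sum hmom, derivative_sum]
  simp only [derivative_C_mul, eval_finset_sum, eval_mul, eval_C]
  simp only [Finset.mul_sum, ← Finset.sum_add_distrib]
  apply Finset.sum_congr rfl
  intro j _
  rw [ipP_Cmul]
  ring

omit hmom in
lemma sqrt_ratio_one {a b : ℝ} (ha : 0 < a) (hb : 0 < b) :
    Real.sqrt (a / b) * Real.sqrt (b / a) = 1 := by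
  rw [← Real.sqrt_mul (by positivity)]
  rw [show a / b * (b / a) = 1 by field_simp]
  exact Real.sqrt_one

lemma ipS_add {c M N : ℝ} (f g h : Polynomial ℝ) :
    ipS μ c M N f (g + h) = ipS μ c M N f g + ipS μ c M N f h := by
  simp only [ipS_eq]
  rw [mul_add, ipP_add hmom]
  simp only [derivative_add, eval_add]
  ring

lemma ipS_lower {c M N : ℝ} {S : ℕ → Polynomial ℝ}
    (hSm : ∀ n, (S n).Monic) (hSd : ∀ n, (S n).natDegree = n)
    (hSo : ∀ i j, i ≠ j → ipS μ c M N (S i) (S j) = 0)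
    (n : ℕ) (q : Polynomial ℝ) (hq : q = 0 ∨ q.natDegree < n) :
    ipS μ c M N (S n) q = 0 := by
  rcases hq with rfl | hq
  · simp [ipS_eq, ipP]
  · have hn : 1 ≤ n := Nat.one_le_iff_ne_zero.mpr (by omega)
    obtain ⟨a, ha⟩ := rep_exists S hSm hSd (n - 1) q (by omega)
    rw [ha, ipS_sum hmom]
    apply Finset.sum_eq_zero
    intro j hj
    simp only [Finset.mem_range] at hj
    rw [hSo n j (by omega)]
    ring

/-- Pairing of `S n` against lower degree polynomials in the plain `L²` product. -/
lemma Sn_pair {c M N : ℝ} {S : ℕ → Polynomial ℝ}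
    (hSm : ∀ n, (S n).Monic) (hSd : ∀ n, (S n).natDegree = n)
    (hSo : ∀ i j, i ≠ j → ipS μ c M N (S i) (S j) = 0)
    (n : ℕ) (q : Polynomial ℝ) (hq : q = 0 ∨ q.natDegree < n) :
    ipP μ (S n * q) = -(M * ((S n).eval c * q.eval c))
      - N * ((derivative (S n)).eval c * (derivative q).eval c) := by
  have h := ipS_lower hmom hSm hSd hSo n q hq
  rw [ipS_eq] at h
  linarith

omit hmom in
lemma ipS_self_pos (hpos : ∀ q : Polynomial ℝ, q ≠ 0 → 0 < ∫ x, q.eval x ^ 2 ∂μ)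
    {c M N : ℝ} (hM : 0 ≤ M) (hN : 0 ≤ N) {q : Polynomial ℝ} (hq : q ≠ 0) :
    0 < ipS μ c M N q q := by
  rw [ipS_eq]
  have h1 : 0 < ipP μ (q * q) := by rw [← nrmSq_eq_ipP']; exact nrmSq_pos hpos hq
  have h2 : 0 ≤ M * (q.eval c * q.eval c) := mul_nonneg hM (mul_self_nonneg _)
  have h3 : 0 ≤ N * ((derivative q).eval c * (derivative q).eval c) :=
    mul_nonneg hN (mul_self_nonneg _)
  linarith

end Stmt8Aux


/-- for every `n ≥ 2`,
`s_n^{M,N} = γ_{n,n} p_n^{[2]} + γ_{n-1,n} p_{n-1}^{[2]} + γ_{n-2,n} p_{n-2}^{[2]}`, with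
`γ_{n,n} = t_n/r_n^{[2]} = (t_n/r_{n+1})·(K_{n+1}(c,c)/K_n(c,c))^{1/2}`,
`γ_{n-1,n} = -(K_{n-1}(c,c)/K_n(c,c))^{1/2}·(d_{n-1} t_n/r_n + e_{n-1}(r_n/r_{n-1})·
  [M s_n^{M,N}(c) p_{n-1}(c) + N (s_n^{M,N})'(c) p_{n-1}'(c)])`, and
`γ_{n-2,n} = (r_{n-1}/t_n)·(K_{n-2}(c,c)/K_{n-1}(c,c))^{1/2}`. -/
theorem stmt8
    (μ : Measure ℝ) [IsFiniteMeasure μ]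
    (hmom : ∀ n : ℕ, Integrable (fun x : ℝ => x ^ n) μ)
    (hpos : ∀ q : Polynomial ℝ, q ≠ 0 → 0 < ∫ x, q.eval x ^ 2 ∂μ)
    (c : ℝ) (hc : ∀ᵐ x ∂μ, c < x)
    (P : ℕ → Polynomial ℝ) (hPm : ∀ n, (P n).Monic) (hPd : ∀ n, (P n).natDegree = n)
    (hPo : ∀ m n, m ≠ n → ∫ x, (P m).eval x * (P n).eval x ∂μ = 0)
    (P2 : ℕ → Polynomial ℝ) (hP2m : ∀ n, (P2 n).Monic) (hP2d : ∀ n, (P2 n).natDegree = n)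
    (hP2o : ∀ m n, m ≠ n → ∫ x, (P2 m).eval x * (P2 n).eval x * (x - c) ^ 2 ∂μ = 0)
    (M N : ℝ) (hM : 0 ≤ M) (hN : 0 ≤ N)
    (S : ℕ → Polynomial ℝ) (hSm : ∀ n, (S n).Monic) (hSd : ∀ n, (S n).natDegree = n)
    (hSo : ∀ m n, m ≠ n → ipS μ c M N (S m) (S n) = 0) :
    ∀ n : ℕ, 2 ≤ n →
      sN μ c M N S n
        = C (tC μ c M N S n / r2C μ c P2 n) * onP2 μ c P2 n
          + C (-(Real.sqrt (Kcc μ P c (n - 1) / Kcc μ P c n))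
                * (dCoef P c (n - 1) * tC μ c M N S n / rC μ P n
                  + eCoef P c (n - 1) * (rC μ P n / rC μ P (n - 1))
                    * (M * (sN μ c M N S n).eval c * (onP μ P (n - 1)).eval c
                      + N * (derivative (sN μ c M N S n)).eval c
                          * (derivative (onP μ P (n - 1))).eval c)))
              * onP2 μ c P2 (n - 1)
          + C ((rC μ P (n - 1) / tC μ c M N S n)
                * Real.sqrt (Kcc μ P c (n - 2) / Kcc μ P c (n - 1)))
              * onP2 μ c P2 (n - 2)
      ∧ tC μ c M N S n / r2C μ c P2 n
          = (tC μ c M N S n / rC μ P (n + 1))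
              * Real.sqrt (Kcc μ P c (n + 1) / Kcc μ P c n) := by
  classical
  intro n hn
  obtain ⟨k, rfl⟩ : ∃ k, n = k + 2 := ⟨n - 2, by omega⟩
  simp only [show k + 2 - 1 = k + 1 from rfl, show k + 2 - 2 = k from rfl]
  -- bridges
  have hPo' : ∀ i j, i ≠ j → Stmt8Aux.ipP μ (1 * (P i * P j)) = 0 := by
    intro i j hij
    have h := hPo i j hij
    unfold Stmt8Aux.ipP
    rw [← h]
    congr 1; funext x; simp [eval_mul]
  have hP2o' : ∀ i j, i ≠ j → Stmt8Aux.ipP μ ((X - C c) ^ 2 * (P2 i * P2 j)) = 0 := by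
    intro i j hij
    have h := hP2o i j hij
    unfold Stmt8Aux.ipP
    rw [← h]
    congr 1; funext x
    simp only [eval_mul, eval_pow, eval_sub, eval_X, eval_C]
    ring
  -- basic positivity
  have hnqpos : ∀ j, 0 < nrmSq μ (P j) := fun j => Stmt8Aux.nrmSq_pos hpos (hPm j).ne_zero
  have hKpos : ∀ j, 0 < Kcc μ P c j := fun j => Stmt8Aux.Kcc_pos hpos hPm hPd c j
  have hN2 : ∀ m, nrmSq2 μ c (P2 m)
      = nrmSq μ (P (m + 1)) * Kcc μ P c (m + 1) / Kcc μ P c m := fun m =>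
    Stmt8Aux.nrmSq2_formula hmom hpos hc hPm hPd hPo' hP2m hP2d hP2o' m
  have hN2' : ∀ m, nrmSq2 μ c (P2 m)
      = nrmSq μ (P (m + 1)) * (Kcc μ P c (m + 1) / Kcc μ P c m) := fun m => by
    rw [hN2 m, mul_div_assoc]
  have hN2pos : ∀ m, 0 < nrmSq2 μ c (P2 m) := by
    intro m
    rw [hN2 m]
    have := hnqpos (m+1); have := hKpos (m+1); have := hKpos m
    positivity
  have hipSS : 0 < ipS μ c M N (S (k + 2)) (S (k + 2)) :=
    Stmt8Aux.ipS_self_pos hpos hM hN (hSm (k + 2)).ne_zero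
  have htpos : 0 < tC μ c M N S (k + 2) := by
    rw [tC]
    positivity
  have hrpos : ∀ j, 0 < rC μ P j := by
    intro j
    rw [rC]
    have := hnqpos j
    positivity
  have hr2pos : ∀ j, 0 < r2C μ c P2 j := by
    intro j
    rw [r2C]
    have := hN2pos j
    positivity
  have hr2N2 : ∀ j, r2C μ c P2 j * nrmSq2 μ c (P2 j) = Real.sqrt (nrmSq2 μ c (P2 j)) := by
    intro j
    rw [r2C, one_div, inv_mul_eq_div, Real.div_sqrt]
  -- values of pairings of sN against the P2 family
  set t : ℝ := tC μ c M N S (k + 2) with ht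
  have hsNdef : sN μ c M N S (k + 2) = C t * S (k + 2) := rfl
  have hGtop : Stmt8Aux.ipP μ ((X - C c) ^ 2 * (P2 (k + 2) * sN μ c M N S (k + 2)))
      = t * nrmSq2 μ c (P2 (k + 2)) := by
    rw [hsNdef, show (X - C c) ^ 2 * (P2 (k + 2) * (C t * S (k + 2)))
        = C t * ((X - C c) ^ 2 * (P2 (k + 2) * S (k + 2))) from by ring,
      Stmt8Aux.ipP_Cmul,
      Stmt8Aux.ip_monic hmom _ P2 hP2m hP2d hP2o' (k + 2) (S (k + 2)) (hSm (k + 2))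
        (hSd (k + 2)),
      ← Stmt8Aux.nrmSq2_eq_ipP]
  have hqm : ((X - C c) ^ 2 * P2 k).Monic := ((monic_X_sub_C c).pow 2).mul (hP2m k)
  have hqd : ((X - C c) ^ 2 * P2 k).natDegree = k + 2 := by
    rw [((monic_X_sub_C c).pow 2).natDegree_mul (hP2m k), hP2d, natDegree_pow,
      natDegree_X_sub_C]
    omega
  have hqc : ((X - C c) ^ 2 * P2 k).eval c = 0 := by simp
  have hqdc : (derivative ((X - C c) ^ 2 * P2 k)).eval c = 0 := by
    simp [derivative_mul, derivative_pow, derivative_sub]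
  have hGk : Stmt8Aux.ipP μ ((X - C c) ^ 2 * (P2 k * sN μ c M N S (k + 2)))
      = t * ipS μ c M N (S (k + 2)) (S (k + 2)) := by
    have h1 : Stmt8Aux.ipP μ ((X - C c) ^ 2 * (P2 k * sN μ c M N S (k + 2)))
        = t * Stmt8Aux.ipP μ (S (k + 2) * ((X - C c) ^ 2 * P2 k)) := by
      rw [hsNdef, show (X - C c) ^ 2 * (P2 k * (C t * S (k + 2)))
          = C t * (S (k + 2) * ((X - C c) ^ 2 * P2 k)) from by ring, Stmt8Aux.ipP_Cmul]
    have h2 : Stmt8Aux.ipP μ (S (k + 2) * ((X - C c) ^ 2 * P2 k))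
        = ipS μ c M N (S (k + 2)) ((X - C c) ^ 2 * P2 k) := by
      rw [Stmt8Aux.ipS_eq, hqc, hqdc]
      ring
    have hlow := Stmt8Aux.lower_or_zero hqm (hSm (k + 2)) hqd (hSd (k + 2))
    have h3 : ipS μ c M N (S (k + 2)) ((X - C c) ^ 2 * P2 k)
        = ipS μ c M N (S (k + 2)) (S (k + 2)) := by
      have hsplit : (X - C c) ^ 2 * P2 k
          = S (k + 2) + ((X - C c) ^ 2 * P2 k - S (k + 2)) := by ring
      rw [hsplit, Stmt8Aux.ipS_add hmom,
        Stmt8Aux.ipS_lower hmom hSm hSd hSo (k + 2) _ hlow, add_zero]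
    rw [h1, h2, h3]
  have hsNdeg : (sN μ c M N S (k + 2)).natDegree ≤ k + 2 := by
    rw [hsNdef]
    exact le_trans (natDegree_C_mul_le _ _) (le_of_eq (hSd (k + 2)))
  have hev : (sN μ c M N S (k + 2)).eval c = t * (S (k + 2)).eval c := by
    rw [hsNdef]; simp [eval_mul]
  have hdev : (derivative (sN μ c M N S (k + 2))).eval c
      = t * (derivative (S (k + 2))).eval c := by
    rw [hsNdef, derivative_C_mul]; simp [eval_mul]
  have hGmid : Stmt8Aux.ipP μ ((X - C c) ^ 2 * (P2 (k + 1) * sN μ c M N S (k + 2)))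
      = -(dCoef P c (k + 1)) * (t * nrmSq μ (P (k + 2)))
        - eCoef P c (k + 1)
          * (M * ((sN μ c M N S (k + 2)).eval c * (P (k + 1)).eval c)
            + N * ((derivative (sN μ c M N S (k + 2))).eval c
                * (derivative (P (k + 1))).eval c)) := by
    have hT := Stmt8Aux.threeterm hmom hpos hc hPm hPd hPo' hP2m hP2d hP2o' (k + 1)
    have hsplit : (X - C c) ^ 2 * (P2 (k + 1) * sN μ c M N S (k + 2))
        = 1 * (P (k + 3) * sN μ c M N S (k + 2))
          + C (-(dCoef P c (k + 1))) * (1 * (P (k + 2) * sN μ c M N S (k + 2)))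
          + C (eCoef P c (k + 1)) * (1 * (P (k + 1) * sN μ c M N S (k + 2))) := by
      calc (X - C c) ^ 2 * (P2 (k + 1) * sN μ c M N S (k + 2))
          = ((X - C c) ^ 2 * P2 (k + 1)) * sN μ c M N S (k + 2) := by ring
        _ = (P (k + 3) + C (-(dCoef P c (k + 1))) * P (k + 2)
              + C (eCoef P c (k + 1)) * P (k + 1)) * sN μ c M N S (k + 2) := by rw [hT]
        _ = _ := by ring
    have hterm1 : Stmt8Aux.ipP μ (1 * (P (k + 3) * sN μ c M N S (k + 2))) = 0 :=
      Stmt8Aux.ip_lower hmom 1 P hPm hPd hPo' (k + 3) _ (Or.inr (by omega))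
    have hterm2 : Stmt8Aux.ipP μ (1 * (P (k + 2) * sN μ c M N S (k + 2)))
        = t * nrmSq μ (P (k + 2)) := by
      rw [hsNdef, show (1 : Polynomial ℝ) * (P (k + 2) * (C t * S (k + 2)))
          = C t * (1 * (P (k + 2) * S (k + 2))) from by ring, Stmt8Aux.ipP_Cmul,
        Stmt8Aux.ip_monic hmom 1 P hPm hPd hPo' (k + 2) (S (k + 2)) (hSm (k + 2))
          (hSd (k + 2)), ← Stmt8Aux.nrmSq_eq_ipP]
    have hterm3 : Stmt8Aux.ipP μ (1 * (P (k + 1) * sN μ c M N S (k + 2)))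
        = t * (-(M * ((S (k + 2)).eval c * (P (k + 1)).eval c))
          - N * ((derivative (S (k + 2))).eval c * (derivative (P (k + 1))).eval c)) := by
      rw [hsNdef, show (1 : Polynomial ℝ) * (P (k + 1) * (C t * S (k + 2)))
          = C t * (S (k + 2) * P (k + 1)) from by ring, Stmt8Aux.ipP_Cmul,
        Stmt8Aux.Sn_pair hmom hSm hSd hSo (k + 2) (P (k + 1))
          (Or.inr (by rw [hPd]; omega))]
    rw [hsplit, Stmt8Aux.ipP_add hmom, Stmt8Aux.ipP_add hmom, Stmt8Aux.ipP_Cmul,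
      Stmt8Aux.ipP_Cmul, hterm1, hterm2, hterm3, hev, hdev]
    ring
  have hGlow : ∀ j, j < k →
      Stmt8Aux.ipP μ ((X - C c) ^ 2 * (P2 j * sN μ c M N S (k + 2))) = 0 := by
    intro j hj
    have hqc' : ((X - C c) ^ 2 * P2 j).eval c = 0 := by simp
    have hqdc' : (derivative ((X - C c) ^ 2 * P2 j)).eval c = 0 := by
      simp [derivative_mul, derivative_pow, derivative_sub]
    have hqd' : ((X - C c) ^ 2 * P2 j).natDegree = j + 2 := by
      rw [((monic_X_sub_C c).pow 2).natDegree_mul (hP2m j), hP2d, natDegree_pow,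
        natDegree_X_sub_C]
      omega
    have h1 : Stmt8Aux.ipP μ ((X - C c) ^ 2 * (P2 j * sN μ c M N S (k + 2)))
        = t * Stmt8Aux.ipP μ (S (k + 2) * ((X - C c) ^ 2 * P2 j)) := by
      rw [hsNdef, show (X - C c) ^ 2 * (P2 j * (C t * S (k + 2)))
          = C t * (S (k + 2) * ((X - C c) ^ 2 * P2 j)) from by ring, Stmt8Aux.ipP_Cmul]
    rw [h1, Stmt8Aux.Sn_pair hmom hSm hSd hSo (k + 2) _
      (Or.inr (by rw [hqd']; omega)), hqc', hqdc']
    ring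
  have key : ∀ a b d : ℝ,
      a * (r2C μ c P2 (k + 2) * nrmSq2 μ c (P2 (k + 2))) = t * nrmSq2 μ c (P2 (k + 2)) →
      b * (r2C μ c P2 (k + 1) * nrmSq2 μ c (P2 (k + 1)))
        = -(dCoef P c (k + 1)) * (t * nrmSq μ (P (k + 2)))
          - eCoef P c (k + 1)
            * (M * ((sN μ c M N S (k + 2)).eval c * (P (k + 1)).eval c)
              + N * ((derivative (sN μ c M N S (k + 2))).eval c
                  * (derivative (P (k + 1))).eval c)) →
      d * (r2C μ c P2 k * nrmSq2 μ c (P2 k)) = t * ipS μ c M N (S (k + 2)) (S (k + 2)) →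
      sN μ c M N S (k + 2) = C a * onP2 μ c P2 (k + 2) + C b * onP2 μ c P2 (k + 1)
        + C d * onP2 μ c P2 k := by
    intro a b d ha hb hd
    rw [← sub_eq_zero]
    apply Stmt8Aux.zero_of_orth hmom ((X - C c) ^ 2) (Stmt8Aux.pos_w_sq hpos c) P2 hP2m hP2d
      (k + 2)
    · have honP2deg : ∀ (x : ℝ) (i : ℕ), (C x * onP2 μ c P2 i).natDegree ≤ i := by
        intro x i
        simp only [onP2]
        exact le_trans (natDegree_C_mul_le _ _)
          (le_trans (natDegree_C_mul_le _ _) (le_of_eq (hP2d i)))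
      refine le_trans (natDegree_sub_le _ _) (max_le hsNdeg ?_)
      refine le_trans (natDegree_add_le _ _)
        (max_le (le_trans (natDegree_add_le _ _)
          (max_le (le_trans (honP2deg _ _) (by omega)) (le_trans (honP2deg _ _) (by omega))))
          (le_trans (honP2deg _ _) (by omega)))
    · intro j hj
      have hexp : (X - C c) ^ 2 * (P2 j * (sN μ c M N S (k + 2)
            - (C a * onP2 μ c P2 (k + 2) + C b * onP2 μ c P2 (k + 1)
              + C d * onP2 μ c P2 k)))
          = (X - C c) ^ 2 * (P2 j * sN μ c M N S (k + 2))
            - C a * (C (r2C μ c P2 (k + 2)) * ((X - C c) ^ 2 * (P2 j * P2 (k + 2))))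
            - C b * (C (r2C μ c P2 (k + 1)) * ((X - C c) ^ 2 * (P2 j * P2 (k + 1))))
            - C d * (C (r2C μ c P2 k) * ((X - C c) ^ 2 * (P2 j * P2 k))) := by
        simp only [onP2]; ring
      rw [hexp, Stmt8Aux.ipP_sub hmom, Stmt8Aux.ipP_sub hmom, Stmt8Aux.ipP_sub hmom,
        Stmt8Aux.ipP_Cmul, Stmt8Aux.ipP_Cmul, Stmt8Aux.ipP_Cmul, Stmt8Aux.ipP_Cmul,
        Stmt8Aux.ipP_Cmul, Stmt8Aux.ipP_Cmul]
      by_cases h2 : j = k + 2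
      · rw [h2, hGtop, hP2o' (k + 2) (k + 1) (by omega), hP2o' (k + 2) k (by omega),
          ← Stmt8Aux.nrmSq2_eq_ipP]
        linear_combination -ha
      · by_cases h1 : j = k + 1
        · rw [h1, hGmid, hP2o' (k + 1) (k + 2) (by omega), hP2o' (k + 1) k (by omega),
            ← Stmt8Aux.nrmSq2_eq_ipP]
          linear_combination -hb
        · by_cases h0 : j = k
          · rw [h0, hGk, hP2o' k (k + 2) (by omega), hP2o' k (k + 1) (by omega),
              ← Stmt8Aux.nrmSq2_eq_ipP]
            linear_combination -hd
          · rw [hGlow j (by omega), hP2o' j (k + 2) h2, hP2o' j (k + 1) h1, hP2o' j k h0]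
            ring
  constructor
  · refine key _ _ _ ?_ ?_ ?_
    · have h := ne_of_gt (hr2pos (k + 2))
      field_simp
    · have honPev : (onP μ P (k + 1)).eval c = rC μ P (k + 1) * (P (k + 1)).eval c := by
        simp [onP]
      have honPdev : (derivative (onP μ P (k + 1))).eval c
          = rC μ P (k + 1) * (derivative (P (k + 1))).eval c := by
        simp [onP, derivative_C_mul]
      rw [honPev, honPdev, hr2N2 (k + 1), hN2' (k + 1),
        Real.sqrt_mul (le_of_lt (hnqpos (k + 1 + 1)))]
      simp only [rC]
      have e1 := Stmt8Aux.sqrt_ratio_one (hKpos (k + 1)) (hKpos (k + 2))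
      have e2 : Real.sqrt (nrmSq μ (P (k + 2))) ≠ 0 :=
        ne_of_gt (Real.sqrt_pos.mpr (hnqpos (k + 2)))
      have e2' : Real.sqrt (nrmSq μ (P (k + 1))) ≠ 0 :=
        ne_of_gt (Real.sqrt_pos.mpr (hnqpos (k + 1)))
      have e4 : Real.sqrt (nrmSq μ (P (k + 2))) * Real.sqrt (nrmSq μ (P (k + 2)))
          = nrmSq μ (P (k + 2)) := Real.mul_self_sqrt (hnqpos (k + 2)).le
      simp only [show k + 1 + 1 = k + 2 from rfl]
      field_simp
      linear_combination
        (-(dCoef P c (k + 1) * t * Real.sqrt (nrmSq μ (P (k + 2))) ^ 2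
            + eCoef P c (k + 1)
              * (M * (sN μ c M N S (k + 2)).eval c * (P (k + 1)).eval c
                + N * (derivative (sN μ c M N S (k + 2))).eval c
                    * (derivative (P (k + 1))).eval c))) * e1
          - (dCoef P c (k + 1) * t) * e4
    · rw [hr2N2 k, hN2' k, Real.sqrt_mul (le_of_lt (hnqpos (k + 1))), rC, ht, tC]
      have e1 := Stmt8Aux.sqrt_ratio_one (hKpos k) (hKpos (k + 1))
      have e2 : Real.sqrt (nrmSq μ (P (k + 1))) ≠ 0 :=
        ne_of_gt (Real.sqrt_pos.mpr (hnqpos (k + 1)))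
      have e3 : Real.sqrt (ipS μ c M N (S (k + 2)) (S (k + 2))) ≠ 0 :=
        ne_of_gt (Real.sqrt_pos.mpr hipSS)
      have e4 : Real.sqrt (ipS μ c M N (S (k + 2)) (S (k + 2)))
          * Real.sqrt (ipS μ c M N (S (k + 2)) (S (k + 2)))
          = ipS μ c M N (S (k + 2)) (S (k + 2)) := Real.mul_self_sqrt hipSS.le
      field_simp
      linear_combination (Real.sqrt (ipS μ c M N (S (k + 2)) (S (k + 2))) ^ 2) * e1 + e4
  · rw [r2C, rC, hN2' (k + 2), Real.sqrt_mul (le_of_lt (hnqpos (k + 2 + 1)))]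
    have e1 : Real.sqrt (nrmSq μ (P (k + 3))) ≠ 0 :=
      ne_of_gt (Real.sqrt_pos.mpr (hnqpos (k + 3)))
    field_simp
end

section
/- The monic sequence {P_n^{[2]}} satisfies the three term recurrence relation x·P_n^{[2]}(x) = P_{n+1}^{[2]}(x) + κ_n P_n^{[2]}(x) + τ_n P_{n−1}^{[2]}(x) for every n ≥ 1, where κ_n = (β_n + γ_n·d_{n−1}/e_{n−1})·e_n·(r_n^{[2]}/r_n)² − d_n·(r_n^{[2]}/r_{n+1})² and τ_n = (r_{n−1}^{[2]}/r_{n+1})²·(K_{n+1}(c,c)/K_n(c,c)) > 0. -/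
open MeasureTheory Polynomial

/-- Recurrence coefficient `κ_n` of the monic 3TRR for `P_n^{[2]}`. -/
noncomputable def kappaC (μ : Measure ℝ) (c : ℝ) (P P2 : ℕ → Polynomial ℝ)
    (β γ : ℕ → ℝ) (n : ℕ) : ℝ :=
  (β n + γ n * dCoef P c (n - 1) / eCoef P c (n - 1)) * eCoef P c n
      * (r2C μ c P2 n / rC μ P n) ^ 2
    - dCoef P c n * (r2C μ c P2 n / rC μ P (n + 1)) ^ 2


/-- Linear functional `q ↦ ∫ q dμ`. -/
noncomputable def intL (μ : Measure ℝ) (q : Polynomial ℝ) : ℝ := ∫ x, q.eval x ∂μ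

/-- Wronskian-type quantity `W_k = P_{k+1}'(c) P_k(c) − P_k'(c) P_{k+1}(c)`. -/
noncomputable def Wron (P : ℕ → Polynomial ℝ) (c : ℝ) (k : ℕ) : ℝ :=
  (derivative (P (k+1))).eval c * (P k).eval c
    - (derivative (P k)).eval c * (P (k+1)).eval c

section AuxLemmas
variable {μ : Measure ℝ}

lemma integrable_eval (hmom : ∀ n : ℕ, Integrable (fun x : ℝ => x ^ n) μ)
    (q : Polynomial ℝ) : Integrable (fun x => q.eval x) μ := by
  have h : (fun x : ℝ => q.eval x)
      = fun x => ∑ k ∈ Finset.range (q.natDegree+1), q.coeff k * x ^ k := by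
    funext x; exact q.eval_eq_sum_range x
  rw [h]
  exact integrable_finset_sum _ fun k _ => (hmom k).const_mul _

lemma intL_add (hmom : ∀ n : ℕ, Integrable (fun x : ℝ => x ^ n) μ)
    (p q : Polynomial ℝ) : intL μ (p + q) = intL μ p + intL μ q := by
  unfold intL
  simp only [eval_add]
  exact integral_add (integrable_eval hmom p) (integrable_eval hmom q)

lemma intL_Cmul (a : ℝ) (p : Polynomial ℝ) : intL μ (C a * p) = a * intL μ p := by
  unfold intL
  simp only [eval_mul, eval_C]
  exact integral_const_mul a _

lemma intL_sub (hmom : ∀ n : ℕ, Integrable (fun x : ℝ => x ^ n) μ)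
    (p q : Polynomial ℝ) : intL μ (p - q) = intL μ p - intL μ q := by
  have := intL_add hmom (p - q) q
  simp only [sub_add_cancel] at this; linarith

lemma intL_sum (hmom : ∀ n : ℕ, Integrable (fun x : ℝ => x ^ n) μ)
    (s : Finset ℕ) (f : ℕ → Polynomial ℝ) :
    intL μ (∑ j ∈ s, f j) = ∑ j ∈ s, intL μ (f j) := by
  classical
  induction s using Finset.induction with
  | empty => simp [intL]
  | insert a s h ih => simp [Finset.sum_insert h, intL_add hmom, ih]

/-- Span lemma: any polynomial of degree ≤ N is a combination of `P 0, …, P N`. -/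

lemma span_lemma (P : ℕ → Polynomial ℝ) (hPm : ∀ n, (P n).Monic)
    (hPd : ∀ n, (P n).natDegree = n) :
    ∀ N : ℕ, ∀ Q : Polynomial ℝ, Q.natDegree ≤ N →
      ∃ f : ℕ → ℝ, Q = ∑ j ∈ Finset.range (N+1), C (f j) * P j := by
  intro N
  induction N with
  | zero =>
    intro Q hQ
    refine ⟨fun _ => Q.coeff 0, ?_⟩
    have hP0 : P 0 = 1 := ((hPm 0).natDegree_eq_zero).mp (hPd 0)
    have hQ0 : Q = C (Q.coeff 0) := Polynomial.eq_C_of_natDegree_le_zero hQ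
    rw [Finset.sum_range_one, hP0, mul_one]; exact hQ0
  | succ N ih =>
    intro Q hQ
    set a := Q.coeff (N+1) with ha
    have hdeg : (Q - C a * P (N+1)).natDegree ≤ N := by
      rw [Polynomial.natDegree_le_iff_coeff_eq_zero]
      intro m hm
      rcases Nat.lt_or_ge (N+1) m with h1 | h1
      · simp only [coeff_sub, coeff_C_mul]
        rw [coeff_eq_zero_of_natDegree_lt (lt_of_le_of_lt hQ h1),
          coeff_eq_zero_of_natDegree_lt (by rw [hPd]; exact h1)]
        ring
      · have hme : m = N + 1 := le_antisymm h1 hm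
        subst hme
        simp only [coeff_sub, coeff_C_mul]
        have h2 : (P (N+1)).coeff (N+1) = 1 := by
          have := (hPm (N+1)).coeff_natDegree; rwa [hPd] at this
        rw [h2]; ring
    obtain ⟨f, hf⟩ := ih _ hdeg
    refine ⟨fun j => if j = N+1 then a else f j, ?_⟩
    rw [Finset.sum_range_succ]
    have hrw : ∑ j ∈ Finset.range (N+1), C (if j = N+1 then a else f j) * P j
        = ∑ j ∈ Finset.range (N+1), C (f j) * P j := by
      apply Finset.sum_congr rfl
      intro j hj
      rw [if_neg (by simp at hj; omega)]
    rw [hrw, ← hf]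
    simp

lemma genPair (hmom : ∀ n : ℕ, Integrable (fun x : ℝ => x ^ n) μ)
    (P : ℕ → Polynomial ℝ) (hPm : ∀ n, (P n).Monic) (hPd : ∀ n, (P n).natDegree = n)
    (W : Polynomial ℝ) (horth : ∀ m n, m ≠ n → intL μ (P m * P n * W) = 0)
    (n : ℕ) (Q : Polynomial ℝ) (hQ : Q.natDegree ≤ n) :
    intL μ (Q * P n * W) = Q.coeff n * intL μ (P n ^ 2 * W) := by
  obtain ⟨f, hf⟩ := span_lemma P hPm hPd n Q hQ
  have hcoeff : Q.coeff n = f n := by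
    rw [hf, finset_sum_coeff]
    rw [Finset.sum_eq_single n]
    · have h2 : (P n).coeff n = 1 := by
        have := (hPm n).coeff_natDegree; rwa [hPd] at this
      simp [h2]
    · intro j hj hjn
      simp only [coeff_C_mul]
      rw [coeff_eq_zero_of_natDegree_lt (by rw [hPd]; simp at hj; omega)]
      ring
    · intro h; simp at h
  have hexp : Q * P n * W = ∑ j ∈ Finset.range (n+1), C (f j) * (P j * P n * W) := by
    rw [hf, Finset.sum_mul, Finset.sum_mul]
    apply Finset.sum_congr rfl; intro j _; ring
  rw [hexp, intL_sum hmom]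
  rw [Finset.sum_eq_single n]
  · rw [intL_Cmul, hcoeff, sq]
  · intro j hj hjn
    rw [intL_Cmul, horth j n hjn]; ring
  · intro h; simp at h

lemma exp_pair (hmom : ∀ n : ℕ, Integrable (fun x : ℝ => x ^ n) μ)
    (P : ℕ → Polynomial ℝ) (W : Polynomial ℝ)
    (horth : ∀ m n, m ≠ n → intL μ (P m * P n * W) = 0)
    {N : ℕ} {f : ℕ → ℝ} {Q : Polynomial ℝ}
    (hf : Q = ∑ j ∈ Finset.range (N+1), C (f j) * P j) (i : ℕ) (hi : i ≤ N) :
    intL μ (Q * P i * W) = f i * intL μ (P i ^ 2 * W) := by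
  have hexp : Q * P i * W = ∑ j ∈ Finset.range (N+1), C (f j) * (P j * P i * W) := by
    rw [hf, Finset.sum_mul, Finset.sum_mul]
    apply Finset.sum_congr rfl; intro j _; ring
  rw [hexp, intL_sum hmom, Finset.sum_eq_single i]
  · rw [intL_Cmul, sq]
  · intro j hj hjn
    rw [intL_Cmul, horth j i hjn]; ring
  · intro h; exfalso; exact h (Finset.mem_range.mpr (by omega))

lemma cancel_top (p q : Polynomial ℝ) (d : ℕ) (hp : p.natDegree ≤ d+1)
    (hq : q.natDegree ≤ d+1) (h : p.coeff (d+1) = q.coeff (d+1)) :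
    (p - q).natDegree ≤ d := by
  rw [Polynomial.natDegree_le_iff_coeff_eq_zero]
  intro m hm
  rcases Nat.lt_or_ge (d+1) m with h1 | h1
  · rw [coeff_sub, coeff_eq_zero_of_natDegree_lt (lt_of_le_of_lt hp h1),
      coeff_eq_zero_of_natDegree_lt (lt_of_le_of_lt hq h1), sub_zero]
  · have : m = d+1 := le_antisymm h1 hm
    subst this
    rw [coeff_sub, h, sub_self]

lemma ratio_sq (a b : ℝ) (ha : 0 ≤ a) (hb : 0 ≤ b) :
    ((1/Real.sqrt a)/(1/Real.sqrt b))^2 = b / a := by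
  have h1 : (1:ℝ)/Real.sqrt a/(1/Real.sqrt b) = Real.sqrt b / Real.sqrt a := by
    field_simp
  rw [h1, div_pow, Real.sq_sqrt ha, Real.sq_sqrt hb]

end AuxLemmas

/-- the monic sequence `{P_n^{[2]}}` satisfies, for every `n ≥ 1`,
`x P_n^{[2]}(x) = P_{n+1}^{[2]}(x) + κ_n P_n^{[2]}(x) + τ_n P_{n-1}^{[2]}(x)`, with
`τ_n = (r_{n-1}^{[2]}/r_{n+1})²·(K_{n+1}(c,c)/K_n(c,c)) > 0`. -/
theorem stmt9
    (μ : Measure ℝ) [IsFiniteMeasure μ]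
    (hmom : ∀ n : ℕ, Integrable (fun x : ℝ => x ^ n) μ)
    (hpos : ∀ q : Polynomial ℝ, q ≠ 0 → 0 < ∫ x, q.eval x ^ 2 ∂μ)
    (c : ℝ) (hc : ∀ᵐ x ∂μ, c < x)
    (P : ℕ → Polynomial ℝ) (hPm : ∀ n, (P n).Monic) (hPd : ∀ n, (P n).natDegree = n)
    (hPo : ∀ m n, m ≠ n → ∫ x, (P m).eval x * (P n).eval x ∂μ = 0)
    (β γ : ℕ → ℝ)
    (hrec0 : X * P 0 = P 1 + C (β 0) * P 0)
    (hrec : ∀ n : ℕ, 1 ≤ n → X * P n = P (n + 1) + C (β n) * P n + C (γ n) * P (n - 1))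
    (P2 : ℕ → Polynomial ℝ) (hP2m : ∀ n, (P2 n).Monic) (hP2d : ∀ n, (P2 n).natDegree = n)
    (hP2o : ∀ m n, m ≠ n → ∫ x, (P2 m).eval x * (P2 n).eval x * (x - c) ^ 2 ∂μ = 0) :
    ∀ n : ℕ, 1 ≤ n →
      X * P2 n
        = P2 (n + 1) + C (kappaC μ c P P2 β γ n) * P2 n
          + C ((r2C μ c P2 (n - 1) / rC μ P (n + 1)) ^ 2
                * (Kcc μ P c (n + 1) / Kcc μ P c n)) * P2 (n - 1)
      ∧ 0 < (r2C μ c P2 (n - 1) / rC μ P (n + 1)) ^ 2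
              * (Kcc μ P c (n + 1) / Kcc μ P c n) := by
  classical
  -- weight polynomial
  set W2 : Polynomial ℝ := (X - C c) ^ 2 with hW2def
  -- conversions of hypotheses to the `intL` language
  have horth1 : ∀ i j, i ≠ j → intL μ (P i * P j * 1) = 0 := by
    intro i j h
    simpa [intL] using hPo i j h
  have horth2 : ∀ i j, i ≠ j → intL μ (P2 i * P2 j * W2) = 0 := by
    intro i j h
    simpa [intL, hW2def, mul_assoc] using hP2o i j h
  have hnrm : ∀ q : Polynomial ℝ, nrmSq μ q = intL μ (q ^ 2 * 1) := by
    intro q; simp [nrmSq, intL]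
  have hnrm2 : ∀ q : Polynomial ℝ, nrmSq2 μ c q = intL μ (q ^ 2 * W2) := by
    intro q; simp [nrmSq2, intL, hW2def]
  have hN1pos : ∀ k, 0 < intL μ (P k ^ 2 * 1) := by
    intro k
    have h := hpos (P k) (hPm k).ne_zero
    simpa [intL] using h
  have hN2pos : ∀ k, 0 < intL μ (P2 k ^ 2 * W2) := by
    intro k
    have h := hpos (P2 k * (X - C c)) (mul_ne_zero (hP2m k).ne_zero (X_sub_C_ne_zero c))
    simpa [intL, hW2def, mul_pow] using h
  have hP0 : P 0 = 1 := ((hPm 0).natDegree_eq_zero).mp (hPd 0)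
  have hKpos : ∀ k, 0 < Kcc μ P c k := by
    intro k
    apply Finset.sum_pos'
    · intro j _
      exact div_nonneg (sq_nonneg _) (by rw [hnrm]; exact (hN1pos j).le)
    · refine ⟨0, Finset.mem_range.mpr (Nat.succ_pos _), ?_⟩
      apply div_pos
      · rw [hP0]; norm_num
      · rw [hnrm]; exact hN1pos 0
  -- the three term recurrence coefficient γ as ratio of norms
  have hgam : ∀ k : ℕ, intL μ (P (k+1) ^ 2 * 1) = γ (k+1) * intL μ (P k ^ 2 * 1) := by
    intro k
    have hrk := hrec (k+1) (by omega)
    simp only [Nat.add_sub_cancel] at hrk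
    have h1 : (X * P (k+1)) * P k * 1 = (X * P k) * P (k+1) * 1 := by ring
    have h2 : intL μ ((X * P k) * P (k+1) * 1)
        = (X * P k).coeff (k+1) * intL μ (P (k+1) ^ 2 * 1) := by
      refine genPair hmom P hPm hPd 1 horth1 (k+1) _ ?_
      exact natDegree_mul_le.trans (by rw [natDegree_X, hPd]; omega)
    have hc1 : (X * P k).coeff (k+1) = 1 := by
      rw [coeff_X_mul]
      have h := (hPm k).coeff_natDegree; rwa [hPd] at h
    have h3 : (X * P (k+1)) * P k * 1
        = P (k+2) * P k * 1 + C (β (k+1)) * (P (k+1) * P k * 1)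
          + C (γ (k+1)) * (P k ^ 2 * 1) := by
      rw [hrk]; ring
    have h4 : intL μ ((X * P (k+1)) * P k * 1) = γ (k+1) * intL μ (P k ^ 2 * 1) := by
      rw [h3, intL_add hmom, intL_add hmom, intL_Cmul, intL_Cmul,
        horth1 (k+2) k (by omega), horth1 (k+1) k (by omega)]
      ring
    rw [← h4, h1, h2, hc1, one_mul]
  -- confluent Christoffel–Darboux
  have hWron : ∀ k, Wron P c k = Kcc μ P c k * intL μ (P k ^ 2 * 1) := by
    intro k
    induction k with
    | zero =>
      have hP1 : P 1 = X - C (β 0) := by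
        have h := hrec0
        rw [hP0] at h
        linear_combination -h
      have hev0 : (P 0).eval c = 1 := by rw [hP0]; simp
      have hK0 : Kcc μ P c 0 = 1 / intL μ (P 0 ^ 2 * 1) := by
        rw [Kcc, Finset.sum_range_one, hev0, hnrm]; norm_num
      have hW0 : Wron P c 0 = 1 := by
        rw [Wron, hP1, hP0]; simp
      rw [hW0, hK0, one_div, inv_mul_cancel₀ (hN1pos 0).ne']
    | succ m ih =>
      have hrk := hrec (m+1) (by omega)
      simp only [Nat.add_sub_cancel] at hrk
      have e1 := congrArg (fun p => Polynomial.eval c p) hrk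
      have e2 := congrArg (fun p => (Polynomial.derivative p).eval c) hrk
      simp only [eval_mul, eval_add, eval_X, eval_C] at e1
      simp only [derivative_mul, derivative_add, derivative_X, derivative_C_mul,
        derivative_C, zero_mul, add_zero, zero_add, one_mul, eval_add, eval_mul, eval_X,
        eval_C] at e2
      have key : Wron P c (m+1) = (P (m+1)).eval c ^ 2 + γ (m+1) * Wron P c m := by
        rw [Wron, Wron]
        linear_combination (derivative (P (m+1))).eval c * e1 - (P (m+1)).eval c * e2
      have hKs : Kcc μ P c (m+1)
          = Kcc μ P c m + (P (m+1)).eval c ^ 2 / intL μ (P (m+1) ^ 2 * 1) := by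
        rw [Kcc, Kcc, Finset.sum_range_succ, hnrm]
      have hg := hgam m
      have h2 := hN1pos (m+1)
      rw [key, ih, hKs, add_mul, div_mul_cancel₀ _ h2.ne']
      linear_combination (-(Kcc μ P c m)) * hg
  have hWpos : ∀ k, 0 < Wron P c k := by
    intro k
    rw [hWron k]
    exact mul_pos (hKpos k) (hN1pos k)
  have heW : ∀ k, eCoef P c k = Wron P c (k+1) / Wron P c k := by
    intro k
    rw [eCoef,
      show (P (k + 2)).eval c * (derivative (P (k + 1))).eval c
          - (derivative (P (k + 2))).eval c * (P (k + 1)).eval c = -(Wron P c (k+1)) from by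
        rw [Wron]; ring,
      show (P (k + 1)).eval c * (derivative (P k)).eval c
          - (derivative (P (k + 1))).eval c * (P k).eval c = -(Wron P c k) from by
        rw [Wron]; ring,
      neg_div_neg_eq]
  have hepos : ∀ k, 0 < eCoef P c k := by
    intro k; rw [heW]; exact div_pos (hWpos _) (hWpos _)
  -- connection formula: (X-c)² P2ₖ = P_{k+2} - dₖ P_{k+1} + eₖ Pₖ
  have hconn : ∀ k, W2 * P2 k
      = P (k+2) - C (dCoef P c k) * P (k+1) + C (eCoef P c k) * P k := by
    intro k
    have hmonW : (W2 * P2 k).Monic := (((monic_X_sub_C c).pow 2).mul (hP2m k))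
    have hdegW : (W2 * P2 k).natDegree = k + 2 := by
      rw [Monic.natDegree_mul ((monic_X_sub_C c).pow 2) (hP2m k),
        natDegree_pow, natDegree_X_sub_C, hP2d]
      omega
    have hdegR : (W2 * P2 k - P (k+2)).natDegree ≤ k + 1 := by
      apply cancel_top
      · rw [hdegW]
      · rw [hPd]
      · have hc1 : (W2 * P2 k).coeff (k+2) = 1 := by
          have h := hmonW.coeff_natDegree; rwa [hdegW] at h
        have hc2 : (P (k+2)).coeff (k+2) = 1 := by
          have h := (hPm (k+2)).coeff_natDegree; rwa [hPd] at h
        rw [show k+1+1 = k+2 from rfl, hc1, hc2]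
    obtain ⟨f, hf⟩ := span_lemma P hPm hPd (k+1) _ hdegR
    have hfz : ∀ i, i < k → f i = 0 := by
      intro i hi
      have h1 := exp_pair hmom P 1 horth1 hf i (by omega)
      have h2 : (W2 * P2 k - P (k+2)) * P i * 1
          = P i * P2 k * W2 - P (k+2) * P i * 1 := by ring
      have h3 := genPair hmom P2 hP2m hP2d W2 horth2 k (P i) (by rw [hPd]; omega)
      have h4 : (P i).coeff k = 0 := coeff_eq_zero_of_natDegree_lt (by rw [hPd]; omega)
      rw [h2, intL_sub hmom, h3, h4, horth1 (k+2) i (by omega)] at h1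
      simp only [zero_mul, sub_zero] at h1
      exact (mul_eq_zero.mp h1.symm).resolve_right (hN1pos i).ne'
    have hRe : W2 * P2 k - P (k+2) = C (f (k+1)) * P (k+1) + C (f k) * P k := by
      rw [hf, Finset.sum_range_succ, Finset.sum_range_succ,
        Finset.sum_eq_zero (fun j hj => by rw [hfz j (Finset.mem_range.mp hj)]; simp)]
      ring
    have hWev : W2.eval c = 0 := by rw [hW2def]; simp
    have hWev' : (derivative W2).eval c = 0 := by
      rw [hW2def]; simp [derivative_pow]
    have e1 : f (k+1) * (P (k+1)).eval c + f k * (P k).eval c = -((P (k+2)).eval c) := by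
      have h := congrArg (fun p => Polynomial.eval c p) hRe
      simp only [eval_sub, eval_mul, eval_add, eval_C] at h
      rw [hWev] at h
      linear_combination -h
    have e2 : f (k+1) * (derivative (P (k+1))).eval c + f k * (derivative (P k)).eval c
        = -((derivative (P (k+2))).eval c) := by
      have h := congrArg (fun p => (Polynomial.derivative p).eval c) hRe
      simp only [derivative_sub, derivative_mul, derivative_add, derivative_C_mul,
        derivative_C, zero_mul, add_zero, zero_add, eval_sub, eval_add, eval_mul,
        eval_C] at h
      rw [hWev, hWev'] at h
      linear_combination -h
    have hdet : (P (k+1)).eval c * (derivative (P k)).eval c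
        - (derivative (P (k+1))).eval c * (P k).eval c = -(Wron P c k) := by
      rw [Wron]; ring
    have hdetne : (P (k+1)).eval c * (derivative (P k)).eval c
        - (derivative (P (k+1))).eval c * (P k).eval c ≠ 0 := by
      rw [hdet]; exact neg_ne_zero.mpr (hWpos k).ne'
    have ha : f (k+1) = -(dCoef P c k) := by
      have h6 : f (k+1) * ((P (k+1)).eval c * (derivative (P k)).eval c
          - (derivative (P (k+1))).eval c * (P k).eval c)
          = -((P (k + 2)).eval c * (derivative (P k)).eval c
            - (derivative (P (k + 2))).eval c * (P k).eval c) := by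
        linear_combination (derivative (P k)).eval c * e1 - (P k).eval c * e2
      rw [dCoef, ← neg_div, eq_div_iff hdetne]
      exact h6
    have hb : f k = eCoef P c k := by
      have h7 : f k * ((P (k+1)).eval c * (derivative (P k)).eval c
          - (derivative (P (k+1))).eval c * (P k).eval c)
          = (P (k + 2)).eval c * (derivative (P (k + 1))).eval c
            - (derivative (P (k + 2))).eval c * (P (k + 1)).eval c := by
        linear_combination (P (k+1)).eval c * e2 - (derivative (P (k+1))).eval c * e1
      rw [eCoef, eq_div_iff hdetne]
      exact h7
    have hfin : W2 * P2 k = C (f (k+1)) * P (k+1) + C (f k) * P k + P (k+2) := by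
      linear_combination hRe
    rw [hfin, ha, hb, C_neg]; ring
  -- norm in the Christoffel measure
  have hnrm2val : ∀ k, intL μ (P2 k ^ 2 * W2) = eCoef P c k * intL μ (P k ^ 2 * 1) := by
    intro k
    have h0 : P2 k ^ 2 * W2
        = P2 k * P (k+2) * 1 - C (dCoef P c k) * (P2 k * P (k+1) * 1)
          + C (eCoef P c k) * (P2 k * P k * 1) := by
      have h : P2 k ^ 2 * W2 = (W2 * P2 k) * P2 k * 1 := by ring
      rw [h, hconn k]; ring
    have hck : (P2 k).coeff k = 1 := by
      have h := (hP2m k).coeff_natDegree; rwa [hP2d] at h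
    rw [h0, intL_add hmom, intL_sub hmom, intL_Cmul, intL_Cmul,
      genPair hmom P hPm hPd 1 horth1 (k+2) (P2 k) (by rw [hP2d]; omega),
      genPair hmom P hPm hPd 1 horth1 (k+1) (P2 k) (by rw [hP2d]; omega),
      genPair hmom P hPm hPd 1 horth1 k (P2 k) (by rw [hP2d]),
      coeff_eq_zero_of_natDegree_lt (show (P2 k).natDegree < k+2 by rw [hP2d]; omega),
      coeff_eq_zero_of_natDegree_lt (show (P2 k).natDegree < k+1 by rw [hP2d]; omega),
      hck]
    ring
  -- the mixed integral ∫ P2_{k+1} P_k dμ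
  have hIval : ∀ k, eCoef P c k * intL μ (P2 (k+1) * P k * 1)
      = dCoef P c k * intL μ (P (k+1) ^ 2 * 1) := by
    intro k
    have h0 : C (eCoef P c k) * (P2 (k+1) * P k * 1)
        = P2 (k+1) * P2 k * W2 - P2 (k+1) * P (k+2) * 1
          + C (dCoef P c k) * (P2 (k+1) * P (k+1) * 1) := by
      linear_combination (-(P2 (k+1))) * (hconn k)
    have h1 := congrArg (intL μ) h0
    rw [intL_Cmul, intL_add hmom, intL_sub hmom,
      horth2 (k+1) k (by omega), intL_Cmul,
      genPair hmom P hPm hPd 1 horth1 (k+2) (P2 (k+1)) (by rw [hP2d]; omega),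
      genPair hmom P hPm hPd 1 horth1 (k+1) (P2 (k+1)) (by rw [hP2d]),
      coeff_eq_zero_of_natDegree_lt (show (P2 (k+1)).natDegree < k+2 by rw [hP2d]; omega)]
        at h1
    have hck : (P2 (k+1)).coeff (k+1) = 1 := by
      have h := (hP2m (k+1)).coeff_natDegree; rwa [hP2d] at h
    rw [hck] at h1
    linear_combination h1
  -- main argument
  intro n hn
  obtain ⟨m, rfl⟩ : ∃ m, n = m + 1 := ⟨n - 1, by omega⟩
  simp only [Nat.add_sub_cancel, show m + 1 + 1 = m + 2 from rfl]
  have hratio : ∀ j k : ℕ, (r2C μ c P2 j / rC μ P k) ^ 2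
      = intL μ (P k ^ 2 * 1) / intL μ (P2 j ^ 2 * W2) := by
    intro j k
    rw [r2C, rC, ratio_sq _ _ (by rw [hnrm2]; exact (hN2pos j).le)
      (by rw [hnrm]; exact (hN1pos k).le), hnrm, hnrm2]
  set κ := kappaC μ c P P2 β γ (m+1) with hκdef
  set τ := (r2C μ c P2 m / rC μ P (m + 2)) ^ 2 * (Kcc μ P c (m + 2) / Kcc μ P c (m + 1))
    with hτdef
  have hτpos : 0 < τ := by
    rw [hτdef, hratio]
    exact mul_pos (div_pos (hN1pos _) (hN2pos _)) (div_pos (hKpos _) (hKpos _))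
  -- value equation for τ
  have hTau2 : intL μ (P2 (m+1) ^ 2 * W2) = τ * intL μ (P2 m ^ 2 * W2) := by
    rw [hτdef, hratio, hnrm2val (m+1), heW (m+1),
      show m + 1 + 1 = m + 2 from rfl, hWron (m+2), hWron (m+1)]
    have hB := (hN1pos (m+1)).ne'
    have hD := (hN2pos m).ne'
    have hK := (hKpos (m+1)).ne'
    generalize intL μ (P (m+2) ^ 2 * 1) = A at *
    generalize hBg : intL μ (P (m+1) ^ 2 * 1) = B at *
    generalize hDg : intL μ (P2 m ^ 2 * W2) = D at *
    generalize hKg : Kcc μ P c (m+1) = K1 at *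
    field_simp
  -- value equation for κ
  have hκ2 : κ * intL μ (P2 (m+1) ^ 2 * W2)
      = (β (m+1) + γ (m+1) * dCoef P c m / eCoef P c m) * eCoef P c (m+1)
          * intL μ (P (m+1) ^ 2 * 1)
        - dCoef P c (m+1) * intL μ (P (m+2) ^ 2 * 1) := by
    rw [hκdef, kappaC]
    simp only [Nat.add_sub_cancel, show m + 1 + 1 = m + 2 from rfl]
    rw [hratio, hratio]
    have hN2 := (hN2pos (m+1)).ne'
    have he0 := (hepos m).ne'
    generalize intL μ (P (m+2) ^ 2 * 1) = A at *
    generalize intL μ (P (m+1) ^ 2 * 1) = B at *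
    generalize intL μ (P2 (m+1) ^ 2 * W2) = D at *
    field_simp
  -- the diagonal integral T
  have hrecm := hrec (m+1) (by omega)
  simp only [Nat.add_sub_cancel, show m + 1 + 1 = m + 2 from rfl] at hrecm
  have hdegX : (X * P2 (m+1)).natDegree ≤ m + 2 :=
    natDegree_mul_le.trans (by rw [natDegree_X, hP2d]; omega)
  have hcX1 : (X * P2 (m+1)).coeff (m+2) = 1 := by
    rw [show m+2 = (m+1)+1 from rfl, coeff_X_mul]
    have h := (hP2m (m+1)).coeff_natDegree; rwa [hP2d] at h
  have hT : intL μ ((X * P2 (m+1)) * P2 (m+1) * W2)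
      = -(dCoef P c (m+1)) * intL μ (P (m+2) ^ 2 * 1)
        + eCoef P c (m+1) * (β (m+1) * intL μ (P (m+1) ^ 2 * 1)
            + γ (m+1) * intL μ (P2 (m+1) * P m * 1)) := by
    have h0 : (X * P2 (m+1)) * P2 (m+1) * W2
        = (X * P2 (m+1)) * (W2 * P2 (m+1)) * 1 := by ring
    rw [h0, hconn (m+1), show m + 1 + 2 = m + 3 from rfl,
      show m + 1 + 1 = m + 2 from rfl]
    have h1 : (X * P2 (m+1)) * (P (m+3) - C (dCoef P c (m+1)) * P (m+2)
          + C (eCoef P c (m+1)) * P (m+1)) * 1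
        = (X * P2 (m+1)) * P (m+3) * 1
          - C (dCoef P c (m+1)) * ((X * P2 (m+1)) * P (m+2) * 1)
          + C (eCoef P c (m+1)) * ((X * P (m+1)) * P2 (m+1) * 1) := by ring
    rw [h1, intL_add hmom, intL_sub hmom, intL_Cmul, intL_Cmul, hrecm]
    have h2 : (P (m+2) + C (β (m+1)) * P (m+1) + C (γ (m+1)) * P m) * P2 (m+1) * 1
        = P2 (m+1) * P (m+2) * 1 + C (β (m+1)) * (P2 (m+1) * P (m+1) * 1)
          + C (γ (m+1)) * (P2 (m+1) * P m * 1) := by ring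
    rw [h2, intL_add hmom, intL_add hmom, intL_Cmul, intL_Cmul,
      genPair hmom P hPm hPd 1 horth1 (m+3) (X * P2 (m+1)) (hdegX.trans (by omega)),
      genPair hmom P hPm hPd 1 horth1 (m+2) (X * P2 (m+1)) hdegX,
      genPair hmom P hPm hPd 1 horth1 (m+2) (P2 (m+1)) (by rw [hP2d]; omega),
      genPair hmom P hPm hPd 1 horth1 (m+1) (P2 (m+1)) (by rw [hP2d]),
      hcX1,
      coeff_eq_zero_of_natDegree_lt (lt_of_le_of_lt hdegX (by omega)),
      coeff_eq_zero_of_natDegree_lt (show (P2 (m+1)).natDegree < m+2 by rw [hP2d]; omega)]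
    have hck : (P2 (m+1)).coeff (m+1) = 1 := by
      have h := (hP2m (m+1)).coeff_natDegree; rwa [hP2d] at h
    rw [hck]
    ring
  -- degree of the remainder
  have hdegG : (X * P2 (m+1) - (P2 (m+2) + C κ * P2 (m+1) + C τ * P2 m)).natDegree
      ≤ m + 1 := by
    apply cancel_top
    · rw [show m+1+1 = m+2 from rfl]; exact hdegX
    · rw [show m+1+1 = m+2 from rfl]
      refine (natDegree_add_le _ _).trans (max_le ((natDegree_add_le _ _).trans
        (max_le ?_ ?_)) ?_)
      · rw [hP2d]
      · exact (natDegree_C_mul_le _ _).trans (by rw [hP2d]; omega)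
      · exact (natDegree_C_mul_le _ _).trans (by rw [hP2d]; omega)
    · rw [show m+1+1 = m+2 from rfl, hcX1, coeff_add, coeff_add, coeff_C_mul, coeff_C_mul,
        coeff_eq_zero_of_natDegree_lt (show (P2 (m+1)).natDegree < m+2 by rw [hP2d]; omega),
        coeff_eq_zero_of_natDegree_lt (show (P2 m).natDegree < m+2 by rw [hP2d]; omega)]
      have hc2 : (P2 (m+2)).coeff (m+2) = 1 := by
        have h := (hP2m (m+2)).coeff_natDegree; rwa [hP2d] at h
      rw [hc2]; ring
  obtain ⟨f, hf⟩ := span_lemma P2 hP2m hP2d (m+1) _ hdegG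
  have hfz : ∀ i, i ≤ m + 1 → f i = 0 := by
    intro i hi
    have hp := exp_pair hmom P2 W2 horth2 hf i hi
    have h0 : (X * P2 (m+1) - (P2 (m+2) + C κ * P2 (m+1) + C τ * P2 m)) * P2 i * W2
        = (X * P2 (m+1)) * P2 i * W2 - (P2 (m+2) * P2 i * W2
            + C κ * (P2 (m+1) * P2 i * W2) + C τ * (P2 m * P2 i * W2)) := by ring
    rw [h0, intL_sub hmom, intL_add hmom, intL_add hmom, intL_Cmul, intL_Cmul,
      horth2 (m+2) i (by omega)] at hp
    rcases Nat.lt_trichotomy i m with hlt | rfl | hgt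
    · rw [horth2 (m+1) i (by omega), horth2 m i (by omega),
        show (X * P2 (m+1)) * P2 i * W2 = (X * P2 i) * P2 (m+1) * W2 from by ring,
        genPair hmom P2 hP2m hP2d W2 horth2 (m+1) (X * P2 i)
          (natDegree_mul_le.trans (by rw [natDegree_X, hP2d]; omega)),
        coeff_X_mul,
        coeff_eq_zero_of_natDegree_lt (show (P2 i).natDegree < m from by rw [hP2d]; omega)]
        at hp
      simp only [zero_mul, mul_zero, add_zero, zero_add, sub_zero, zero_sub, neg_zero,
        zero_add] at hp
      exact (mul_eq_zero.mp hp.symm).resolve_right (hN2pos i).ne'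
    · rw [horth2 (i+1) i (by omega),
        show (X * P2 (i+1)) * P2 i * W2 = (X * P2 i) * P2 (i+1) * W2 from by ring,
        genPair hmom P2 hP2m hP2d W2 horth2 (i+1) (X * P2 i)
          (natDegree_mul_le.trans (by rw [natDegree_X, hP2d]; omega)),
        coeff_X_mul,
        show P2 i * P2 i * W2 = P2 i ^ 2 * W2 from by ring] at hp
      have hcm : (P2 i).coeff i = 1 := by
        have h := (hP2m i).coeff_natDegree; rwa [hP2d] at h
      rw [hcm, one_mul, hTau2] at hp
      have h9 : (0:ℝ) = f i * intL μ (P2 i ^ 2 * W2) := by rw [← hp]; ring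
      exact (mul_eq_zero.mp h9.symm).resolve_right (hN2pos i).ne'
    · have hieq : i = m + 1 := by omega
      subst hieq
      rw [horth2 m (m+1) (by omega),
        show P2 (m+1) * P2 (m+1) * W2 = P2 (m+1) ^ 2 * W2 from by ring] at hp
      rw [hT, hκ2] at hp
      have he0 := (hepos m).ne'
      have hI := hIval m
      have h9 : (0:ℝ) = f (m+1) * intL μ (P2 (m+1) ^ 2 * W2) := by
        rw [← hp]
        generalize intL μ (P (m+2) ^ 2 * 1) = A at *
        generalize intL μ (P (m+1) ^ 2 * 1) = B at *
        generalize intL μ (P2 (m+1) * P m * 1) = I at *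
        field_simp
        linear_combination (-(eCoef P c (m+1) * γ (m+1))) * hI
      exact (mul_eq_zero.mp h9.symm).resolve_right (hN2pos (m+1)).ne'
  have hG0 : X * P2 (m+1) - (P2 (m+2) + C κ * P2 (m+1) + C τ * P2 m) = 0 := by
    rw [hf]
    exact Finset.sum_eq_zero fun j hj => by
      rw [hfz j (by have := Finset.mem_range.mp hj; omega)]; simp
  refine ⟨?_, hτpos⟩
  exact sub_eq_zero.mp hG0
end

section
/- The Sobolev-type orthonormal polynomials satisfy a five term recurrence relation: setting ρ_{k,n} = ⟨(x−c)² s_n^{M,N}, s_k^{M,N}⟩_S, one has (i) ρ_{k,n} = 0 whenever |n − k| > 2; (ii) ρ_{n+2,n} = t_n/t_{n+2}; (iii) ρ_{n+1,n} = γ_{n,n}γ_{n,n+1} + γ_{n−1,n}γ_{n−1,n+1}; (iv) ρ_{n,n} = γ_{n,n}² + γ_{n−1,n}² + γ_{n−2,n}² (with γ_{j,n} = 0 for j < 0); and (v) for every n ≥ 0, (x−c)²·s_n^{M,N}(x) = ρ_{n+2,n} s_{n+2}^{M,N}(x) + ρ_{n+1,n} s_{n+1}^{M,N}(x) + ρ_{n,n}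 s_n^{M,N}(x) + ρ_{n−1,n} s_{n−1}^{M,N}(x) + ρ_{n−2,n} s_{n−2}^{M,N}(x), with the convention s_{−1}^{M,N} = s_{−2}^{M,N} = 0. -/
open MeasureTheory Polynomial

/-- Five term recurrence coefficient `ρ_{k,n} = ⟨(x-c)² s_n^{M,N}, s_k^{M,N}⟩_S`. -/
noncomputable def rhoC (μ : Measure ℝ) (c M N : ℝ) (S : ℕ → Polynomial ℝ) (k n : ℕ) : ℝ :=
  ipS μ c M N ((X - C c) ^ 2 * sN μ c M N S n) (sN μ c M N S k)


namespace Stmt12Aux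

set_option linter.unusedSectionVars false

open Finset

/-- The Christoffel inner product. -/
noncomputable def ip2 (μ : Measure ℝ) (c : ℝ) (f g : Polynomial ℝ) : ℝ :=
  ∫ x, f.eval x * g.eval x * (x - c) ^ 2 ∂μ

variable {μ : Measure ℝ} [IsFiniteMeasure μ]
  (hmom : ∀ n : ℕ, Integrable (fun x : ℝ => x ^ n) μ)

include hmom

theorem integrable_evalP (p : Polynomial ℝ) : Integrable (fun x => p.eval x) μ := by
  have h : (fun x : ℝ => p.eval x)
      = fun x => ∑ i ∈ Finset.range (p.natDegree + 1), p.coeff i * x ^ i := by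
    funext x; exact p.eval_eq_sum_range x
  rw [h]
  exact integrable_finset_sum _ fun i _ => (hmom i).const_mul _

theorem integrable_mul (f g : Polynomial ℝ) :
    Integrable (fun x => f.eval x * g.eval x) μ := by
  have := integrable_evalP hmom (f * g)
  simpa [Polynomial.eval_mul] using this

theorem integrable_mul2 (c : ℝ) (f g : Polynomial ℝ) :
    Integrable (fun x => f.eval x * g.eval x * (x - c) ^ 2) μ := by
  have := integrable_evalP hmom (f * g * (X - C c) ^ 2)
  simpa [Polynomial.eval_mul, Polynomial.eval_pow] using this

theorem ip2_symm (c : ℝ) (f g : Polynomial ℝ) : ip2 μ c f g = ip2 μ c g f := by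
  unfold ip2
  congr 1; funext x; ring

theorem ip2_add_left (c : ℝ) (f g h : Polynomial ℝ) :
    ip2 μ c (f + g) h = ip2 μ c f h + ip2 μ c g h := by
  unfold ip2
  rw [← integral_add (integrable_mul2 hmom c f h) (integrable_mul2 hmom c g h)]
  congr 1; funext x; simp [Polynomial.eval_add]; ring

theorem ip2_smul_left (c a : ℝ) (f h : Polynomial ℝ) :
    ip2 μ c (C a * f) h = a * ip2 μ c f h := by
  unfold ip2
  rw [← integral_const_mul]
  congr 1; funext x; simp [Polynomial.eval_mul]; ring

theorem ipS_symm (c M N : ℝ) (f g : Polynomial ℝ) : ipS μ c M N f g = ipS μ c M N g f := by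
  unfold ipS
  have h : ∫ x, f.eval x * g.eval x ∂μ = ∫ x, g.eval x * f.eval x ∂μ := by
    congr 1; funext x; ring
  rw [h]; ring

theorem ipS_add_left (c M N : ℝ) (f g h : Polynomial ℝ) :
    ipS μ c M N (f + g) h = ipS μ c M N f h + ipS μ c M N g h := by
  unfold ipS
  have h1 : ∫ x, (f + g).eval x * h.eval x ∂μ
      = (∫ x, f.eval x * h.eval x ∂μ) + ∫ x, g.eval x * h.eval x ∂μ := by
    rw [← integral_add (integrable_mul hmom f h) (integrable_mul hmom g h)]
    congr 1; funext x; simp [Polynomial.eval_add]; ring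
  rw [h1]; simp [Polynomial.eval_add, Polynomial.derivative_add]; ring

theorem ipS_smul_left (c M N a : ℝ) (f h : Polynomial ℝ) :
    ipS μ c M N (C a * f) h = a * ipS μ c M N f h := by
  unfold ipS
  have h1 : ∫ x, (C a * f).eval x * h.eval x ∂μ = a * ∫ x, f.eval x * h.eval x ∂μ := by
    rw [← integral_const_mul]
    congr 1; funext x; simp [Polynomial.eval_mul]; ring
  rw [h1]; simp [Polynomial.eval_mul, Polynomial.derivative_mul]; ring

section generic

omit hmom

variable (B : Polynomial ℝ → Polynomial ℝ → ℝ)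
  (Badd : ∀ f g h, B (f + g) h = B f h + B g h)
  (Bsmul : ∀ a f h, B (C a * f) h = a * B f h)
  (Bsymm : ∀ f g, B f g = B g f)

include Badd Bsmul Bsymm

theorem B_zero_left (h : Polynomial ℝ) : B 0 h = 0 := by
  have := Bsmul 0 0 h
  simpa using this

theorem B_sum_left (s : Finset ℕ) (a : ℕ → ℝ) (g : ℕ → Polynomial ℝ) (h : Polynomial ℝ) :
    B (∑ k ∈ s, C (a k) * g k) h = ∑ k ∈ s, a k * B (g k) h := by
  classical
  induction s using Finset.induction_on with
  | empty => simpa using B_zero_left B Badd Bsmul Bsymm h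
  | insert _ _ hnot ih =>
    rw [Finset.sum_insert hnot, Finset.sum_insert hnot, Badd, Bsmul, ih]

theorem B_sum_right (s : Finset ℕ) (a : ℕ → ℝ) (g : ℕ → Polynomial ℝ) (h : Polynomial ℝ) :
    B h (∑ k ∈ s, C (a k) * g k) = ∑ k ∈ s, a k * B h (g k) := by
  rw [Bsymm]
  rw [B_sum_left B Badd Bsmul Bsymm]
  exact Finset.sum_congr rfl fun k _ => by rw [Bsymm]

variable (F : ℕ → Polynomial ℝ) (hFm : ∀ n, (F n).Monic) (hFd : ∀ n, (F n).natDegree = n)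

include hFm hFd

omit Badd Bsmul Bsymm in
theorem span_monic : ∀ (m : ℕ) (Q : Polynomial ℝ), Q.degree < (m : ℕ) →
    ∃ a : ℕ → ℝ, Q = ∑ k ∈ Finset.range m, C (a k) * F k := by
  intro m
  induction m with
  | zero =>
    intro Q hQ
    refine ⟨0, ?_⟩
    have hQ0 : Q = 0 := by
      rw [← Polynomial.degree_eq_bot, ← Nat.WithBot.lt_zero_iff]
      exact_mod_cast hQ
    simp [hQ0]
  | succ m ih =>
    intro Q hQ
    have hdeg : (Q - C (Q.coeff m) * F m).degree < (m : ℕ) := by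
      rw [Polynomial.degree_lt_iff_coeff_zero]
      intro i hi
      have hi' : m ≤ i := by exact_mod_cast hi
      rw [Polynomial.coeff_sub, Polynomial.coeff_C_mul]
      rcases eq_or_lt_of_le hi' with heq | hlt
      · rw [← heq]
        have hcoef : (F m).coeff m = 1 := by
          have h := (hFm m).coeff_natDegree
          rwa [hFd m] at h
        rw [hcoef]; ring
      · have h1 : Q.coeff i = 0 := by
          apply Polynomial.coeff_eq_zero_of_degree_lt
          calc Q.degree < ((m + 1 : ℕ) : WithBot ℕ) := hQ
            _ ≤ (i : WithBot ℕ) := by exact_mod_cast hlt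
        have h2 : (F m).coeff i = 0 := by
          apply Polynomial.coeff_eq_zero_of_natDegree_lt
          rw [hFd m]; exact hlt
        rw [h1, h2]; ring
    obtain ⟨a, ha⟩ := ih _ hdeg
    refine ⟨Function.update a m (Q.coeff m), ?_⟩
    rw [Finset.sum_range_succ, Function.update_self]
    have hs : ∑ k ∈ Finset.range m, C (Function.update a m (Q.coeff m) k) * F k
        = ∑ k ∈ Finset.range m, C (a k) * F k :=
      Finset.sum_congr rfl fun k hk => by
        rw [Function.update_of_ne (Nat.ne_of_lt (Finset.mem_range.1 hk))]
    rw [hs, ← ha]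
    ring

variable (hFo : ∀ m n, m ≠ n → B (F m) (F n) = 0)

include hFo

theorem ortho_lowdeg (n : ℕ) (Q : Polynomial ℝ) (hQ : Q.degree < (n : ℕ)) :
    B (F n) Q = 0 := by
  obtain ⟨a, ha⟩ := span_monic F hFm hFd n Q hQ
  rw [Bsymm, ha, B_sum_left B Badd Bsmul Bsymm]
  refine Finset.sum_eq_zero fun k hk => ?_
  rw [hFo k n (Nat.ne_of_lt (Finset.mem_range.1 hk))]
  ring

theorem fourier (hFpos : ∀ k, 0 < B (F k) (F k)) (m : ℕ) (Q : Polynomial ℝ)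
    (hQ : Q.degree < (m : ℕ)) :
    Q = ∑ k ∈ Finset.range m,
      C (B Q (C (1 / Real.sqrt (B (F k) (F k))) * F k))
        * (C (1 / Real.sqrt (B (F k) (F k))) * F k) := by
  obtain ⟨a, ha⟩ := span_monic F hFm hFd m Q hQ
  have key : ∀ j ∈ Finset.range m, B Q (F j) = a j * B (F j) (F j) := by
    intro j hj
    rw [ha, B_sum_left B Badd Bsmul Bsymm]
    exact Finset.sum_eq_single (s := Finset.range m)
      (f := fun k => a k * B (F k) (F j)) j
      (fun k _ hk => by show a k * B (F k) (F j) = 0; rw [hFo k j hk]; ring)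
      (fun h => absurd hj h)
  conv_lhs => rw [ha]
  refine Finset.sum_congr rfl fun k hk => ?_
  have hvpos := hFpos k
  have hBr : B Q (C (1 / Real.sqrt (B (F k) (F k))) * F k)
      = (1 / Real.sqrt (B (F k) (F k))) * (a k * B (F k) (F k)) := by
    rw [Bsymm, Bsmul, Bsymm (F k) Q, key k hk]
  rw [hBr]
  rw [show C ((1 / Real.sqrt (B (F k) (F k))) * (a k * B (F k) (F k)))
      * (C (1 / Real.sqrt (B (F k) (F k))) * F k)
      = C ((1 / Real.sqrt (B (F k) (F k))) * (a k * B (F k) (F k))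
          * (1 / Real.sqrt (B (F k) (F k)))) * F k by
    rw [← mul_assoc, ← Polynomial.C_mul]]
  congr 2
  have hr : (1 / Real.sqrt (B (F k) (F k))) ^ 2 = 1 / B (F k) (F k) := by
    rw [div_pow, one_pow, Real.sq_sqrt hvpos.le]
  have hfin : 1 / Real.sqrt (B (F k) (F k)) * (a k * B (F k) (F k))
      * (1 / Real.sqrt (B (F k) (F k)))
      = a k * (B (F k) (F k) * (1 / Real.sqrt (B (F k) (F k))) ^ 2) := by ring
  rw [hfin, hr, mul_one_div, div_self (ne_of_gt hvpos), mul_one]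

end generic

end Stmt12Aux

namespace Stmt12Aux

variable {μ : Measure ℝ} [IsFiniteMeasure μ]

omit [IsFiniteMeasure μ] in
theorem ipS_mul_sq (c M N : ℝ) (f g : Polynomial ℝ) :
    ipS μ c M N ((X - C c) ^ 2 * f) g = ip2 μ c f g := by
  unfold ipS ip2
  have h1 : ((X - C c) ^ 2 * f).eval c = 0 := by simp
  have h2 : (Polynomial.derivative ((X - C c) ^ 2 * f)).eval c = 0 := by
    simp [Polynomial.derivative_mul, Polynomial.derivative_pow]
  rw [h1, h2]
  have h3 : ∫ x, ((X - C c) ^ 2 * f).eval x * g.eval x ∂μ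
      = ∫ x, f.eval x * g.eval x * (x - c) ^ 2 ∂μ := by
    congr 1; funext x; simp [Polynomial.eval_mul, Polynomial.eval_pow]; ring
  rw [h3]; ring

omit [IsFiniteMeasure μ] in
theorem ipS_pos (hpos : ∀ q : Polynomial ℝ, q ≠ 0 → 0 < ∫ x, q.eval x ^ 2 ∂μ)
    (c M N : ℝ) (hM : 0 ≤ M) (hN : 0 ≤ N) (Q : Polynomial ℝ) (hQ : Q ≠ 0) :
    0 < ipS μ c M N Q Q := by
  unfold ipS
  have h1 : ∫ x, Q.eval x * Q.eval x ∂μ = ∫ x, Q.eval x ^ 2 ∂μ := by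
    congr 1; funext x; ring
  rw [h1]
  have h2 := hpos Q hQ
  have h3 := mul_nonneg hM (mul_self_nonneg (Q.eval c))
  have h4 := mul_nonneg hN (mul_self_nonneg ((Polynomial.derivative Q).eval c))
  linarith

omit [IsFiniteMeasure μ] in
theorem ip2_pos (hpos : ∀ q : Polynomial ℝ, q ≠ 0 → 0 < ∫ x, q.eval x ^ 2 ∂μ)
    (c : ℝ) (Q : Polynomial ℝ) (hQ : Q ≠ 0) : 0 < ip2 μ c Q Q := by
  have h1 : ip2 μ c Q Q = ∫ x, ((X - C c) * Q).eval x ^ 2 ∂μ := by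
    unfold ip2; congr 1; funext x; simp [Polynomial.eval_mul]; ring
  rw [h1]
  exact hpos _ (mul_ne_zero (Polynomial.X_sub_C_ne_zero c) hQ)

omit [IsFiniteMeasure μ] in
theorem nrmSq2_ip2 (c : ℝ) (Q : Polynomial ℝ) : nrmSq2 μ c Q = ip2 μ c Q Q := by
  unfold nrmSq2 ip2; congr 1; funext x; ring

omit [IsFiniteMeasure μ] in
theorem onP2_eq (c : ℝ) (P2 : ℕ → Polynomial ℝ) (j : ℕ) :
    onP2 μ c P2 j = C (1 / Real.sqrt (ip2 μ c (P2 j) (P2 j))) * P2 j := by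
  unfold onP2 r2C; rw [nrmSq2_ip2]

end Stmt12Aux

open Stmt12Aux

/-- five term recurrence relation for the Sobolev-type orthonormal
polynomials, with `ρ_{k,n} = ⟨(x-c)² s_n^{M,N}, s_k^{M,N}⟩_S` and the convention
that terms with negative indices vanish. -/
theorem stmt12
    (μ : Measure ℝ) [IsFiniteMeasure μ]
    (hmom : ∀ n : ℕ, Integrable (fun x : ℝ => x ^ n) μ)
    (hpos : ∀ q : Polynomial ℝ, q ≠ 0 → 0 < ∫ x, q.eval x ^ 2 ∂μ)
    (c : ℝ) (hc : ∀ᵐ x ∂μ, c < x)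
    (P2 : ℕ → Polynomial ℝ) (hP2m : ∀ n, (P2 n).Monic) (hP2d : ∀ n, (P2 n).natDegree = n)
    (hP2o : ∀ m n, m ≠ n → ∫ x, (P2 m).eval x * (P2 n).eval x * (x - c) ^ 2 ∂μ = 0)
    (M N : ℝ) (hM : 0 ≤ M) (hN : 0 ≤ N)
    (S : ℕ → Polynomial ℝ) (hSm : ∀ n, (S n).Monic) (hSd : ∀ n, (S n).natDegree = n)
    (hSo : ∀ m n, m ≠ n → ipS μ c M N (S m) (S n) = 0) :
    (∀ k n : ℕ, k + 2 < n ∨ n + 2 < k → rhoC μ c M N S k n = 0)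
    ∧ (∀ n : ℕ, rhoC μ c M N S (n + 2) n = tC μ c M N S n / tC μ c M N S (n + 2))
    ∧ (∀ n : ℕ, rhoC μ c M N S (n + 1) n
        = gamC μ c M N S P2 n n * gamC μ c M N S P2 n (n + 1)
          + (if 1 ≤ n then gamC μ c M N S P2 (n - 1) n * gamC μ c M N S P2 (n - 1) (n + 1)
             else 0))
    ∧ (∀ n : ℕ, rhoC μ c M N S n n
        = gamC μ c M N S P2 n n ^ 2
          + (if 1 ≤ n then gamC μ c M N S P2 (n - 1) n ^ 2 else 0)
          + (if 2 ≤ n then gamC μ c M N S P2 (n - 2) n ^ 2 else 0))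
    ∧ (∀ n : ℕ,
        (X - C c) ^ 2 * sN μ c M N S n
          = C (rhoC μ c M N S (n + 2) n) * sN μ c M N S (n + 2)
            + C (rhoC μ c M N S (n + 1) n) * sN μ c M N S (n + 1)
            + C (rhoC μ c M N S n n) * sN μ c M N S n
            + (if 1 ≤ n then C (rhoC μ c M N S (n - 1) n) * sN μ c M N S (n - 1) else 0)
            + (if 2 ≤ n then C (rhoC μ c M N S (n - 2) n) * sN μ c M N S (n - 2) else 0)) := by
  classical
  have Aadd := ipS_add_left hmom c M N
  have Asmul := ipS_smul_left hmom c M N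
  have Asym := ipS_symm hmom c M N
  have Dadd := ip2_add_left hmom c
  have Dsmul := ip2_smul_left hmom c
  have Dsym := ip2_symm hmom c
  have hSpos : ∀ k, 0 < ipS μ c M N (S k) (S k) :=
    fun k => ipS_pos hpos c M N hM hN _ (hSm k).ne_zero
  have hP2pos : ∀ k, 0 < ip2 μ c (P2 k) (P2 k) :=
    fun k => ip2_pos hpos c _ (hP2m k).ne_zero
  have hP2o' : ∀ m n, m ≠ n → ip2 μ c (P2 m) (P2 n) = 0 := hP2o
  have hsN_def : ∀ k, sN μ c M N S k
      = Polynomial.C (1 / Real.sqrt (ipS μ c M N (S k) (S k))) * S k := fun k => rfl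
  have hgam_def : ∀ j n, gamC μ c M N S P2 j n
      = ip2 μ c (sN μ c M N S n) (onP2 μ c P2 j) := fun j n => rfl
  have hrho_def : ∀ k n, rhoC μ c M N S k n
      = ipS μ c M N ((X - C c) ^ 2 * sN μ c M N S n) (sN μ c M N S k) := fun k n => rfl
  have hrho2 : ∀ k n, rhoC μ c M N S k n
      = ip2 μ c (sN μ c M N S n) (sN μ c M N S k) := fun k n => ipS_mul_sq c M N _ _
  have hdeg_sN : ∀ k, (sN μ c M N S k).degree ≤ (k : ℕ) := by
    intro k
    calc (sN μ c M N S k).degree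
        ≤ (Polynomial.C (tC μ c M N S k)).degree + (S k).degree := Polynomial.degree_mul_le _ _
      _ ≤ 0 + (S k).degree := add_le_add Polynomial.degree_C_le le_rfl
      _ = (S k).degree := zero_add _
      _ ≤ (k : ℕ) := by
          rw [Polynomial.degree_eq_natDegree (hSm k).ne_zero, hSd k]
  have hexp : ∀ k, sN μ c M N S k
      = ∑ j ∈ Finset.range (k + 1), Polynomial.C (gamC μ c M N S P2 j k) * onP2 μ c P2 j := by
    intro k
    have hdeg : (sN μ c M N S k).degree < ((k + 1 : ℕ) : WithBot ℕ) :=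
      lt_of_le_of_lt (hdeg_sN k) (by exact_mod_cast Nat.lt_succ_self k)
    have h := fourier (ip2 μ c) Dadd Dsmul Dsym P2 hP2m hP2d hP2o' hP2pos (k + 1) _ hdeg
    calc sN μ c M N S k = _ := h
      _ = _ := Finset.sum_congr rfl fun j _ => by rw [← onP2_eq c P2 j, ← hgam_def j k]
  have hgamzero : ∀ j n, j + 2 < n → gamC μ c M N S P2 j n = 0 := by
    intro j n hjn
    rw [hgam_def, Dsym, ← ipS_mul_sq c M N (onP2 μ c P2 j) (sN μ c M N S n),
      Asym, hsN_def n, Asmul]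
    have hdeg : ((X - C c) ^ 2 * onP2 μ c P2 j).degree < ((n : ℕ) : WithBot ℕ) := by
      have hd1 : ((X - C c) ^ 2 * onP2 μ c P2 j).natDegree ≤ j + 2 := by
        refine le_trans (Polynomial.natDegree_mul_le) ?_
        have h1 : ((X - C c : Polynomial ℝ) ^ 2).natDegree = 2 := by
          simp [Polynomial.natDegree_pow]
        have h2 : (onP2 μ c P2 j).natDegree ≤ j := by
          refine le_trans Polynomial.natDegree_mul_le ?_
          simp [Polynomial.natDegree_C, hP2d j]
        omega
      calc ((X - C c) ^ 2 * onP2 μ c P2 j).degree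
          ≤ (((X - C c) ^ 2 * onP2 μ c P2 j).natDegree : WithBot ℕ) :=
            Polynomial.degree_le_natDegree
        _ ≤ ((j + 2 : ℕ) : WithBot ℕ) := by exact_mod_cast hd1
        _ < ((n : ℕ) : WithBot ℕ) := by exact_mod_cast hjn
    rw [ortho_lowdeg (ipS μ c M N) Aadd Asmul Asym S hSm hSd hSo n _ hdeg]
    ring
  have hsum : ∀ k n, rhoC μ c M N S k n
      = ∑ j ∈ Finset.range (k + 1),
          gamC μ c M N S P2 j n * gamC μ c M N S P2 j k := by
    intro k n
    have hW : ∀ W, ip2 μ c W (sN μ c M N S k)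
        = ∑ j ∈ Finset.range (k + 1),
            gamC μ c M N S P2 j k * ip2 μ c W (onP2 μ c P2 j) := by
      intro W
      conv_lhs => rw [hexp k]
      exact B_sum_right (ip2 μ c) Dadd Dsmul Dsym _ _ _ W
    rw [hrho2 k n, hW]
    exact Finset.sum_congr rfl fun j _ => by rw [← hgam_def j n, mul_comm]
  have hrhosymm : ∀ k n, rhoC μ c M N S k n = rhoC μ c M N S n k := by
    intro k n; rw [hrho2, hrho2, Dsym]
  have part1 : ∀ k n : ℕ, k + 2 < n ∨ n + 2 < k → rhoC μ c M N S k n = 0 := by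
    intro k n h
    rcases h with h | h
    · rw [hsum k n]
      refine Finset.sum_eq_zero fun j hj => ?_
      rw [hgamzero j n (by have := Finset.mem_range.1 hj; omega)]; ring
    · rw [hrhosymm k n, hsum n k]
      refine Finset.sum_eq_zero fun j hj => ?_
      rw [hgamzero j k (by have := Finset.mem_range.1 hj; omega)]
      ring
  have part2 : ∀ n : ℕ, rhoC μ c M N S (n + 2) n
      = tC μ c M N S n / tC μ c M N S (n + 2) := by
    intro n
    have hWm : ((X - C c) ^ 2 * S n).Monic := ((monic_X_sub_C c).pow 2).mul (hSm n)
    have hWd : ((X - C c) ^ 2 * S n).natDegree = n + 2 := by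
      rw [Polynomial.Monic.natDegree_mul ((monic_X_sub_C c).pow 2) (hSm n)]
      simp [Polynomial.natDegree_pow, hSd n]
      omega
    have hdiff : ((X - C c) ^ 2 * S n - S (n + 2)).degree < ((n + 2 : ℕ) : WithBot ℕ) := by
      have hd : ((X - C c) ^ 2 * S n).degree = (S (n + 2)).degree := by
        rw [Polynomial.degree_eq_natDegree hWm.ne_zero,
          Polynomial.degree_eq_natDegree (hSm (n + 2)).ne_zero, hWd, hSd]
      have hl : ((X - C c) ^ 2 * S n).leadingCoeff = (S (n + 2)).leadingCoeff := by
        rw [hWm.leadingCoeff, (hSm (n + 2)).leadingCoeff]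
      have h := Polynomial.degree_sub_lt hd hWm.ne_zero hl
      rwa [Polynomial.degree_eq_natDegree hWm.ne_zero, hWd] at h
    have e1 : rhoC μ c M N S (n + 2) n
        = tC μ c M N S n * ipS μ c M N ((X - C c) ^ 2 * S n) (sN μ c M N S (n + 2)) := by
      rw [hrho_def,
        show (X - C c) ^ 2 * sN μ c M N S n
          = Polynomial.C (tC μ c M N S n) * ((X - C c) ^ 2 * S n) from by
            rw [show sN μ c M N S n = Polynomial.C (tC μ c M N S n) * S n from rfl]; ring,
        Asmul]
    have e2 : ipS μ c M N ((X - C c) ^ 2 * S n) (sN μ c M N S (n + 2))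
        = ipS μ c M N (S (n + 2)) (sN μ c M N S (n + 2))
          + ipS μ c M N ((X - C c) ^ 2 * S n - S (n + 2)) (sN μ c M N S (n + 2)) := by
      conv_lhs => rw [show (X - C c) ^ 2 * S n
        = S (n + 2) + ((X - C c) ^ 2 * S n - S (n + 2)) from by ring]
      exact Aadd _ _ _
    have e3 : ipS μ c M N ((X - C c) ^ 2 * S n - S (n + 2)) (sN μ c M N S (n + 2)) = 0 := by
      rw [Asym, hsN_def, Asmul,
        ortho_lowdeg (ipS μ c M N) Aadd Asmul Asym S hSm hSd hSo (n + 2) _ hdiff]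
      ring
    have e4 : ipS μ c M N (S (n + 2)) (sN μ c M N S (n + 2))
        = Real.sqrt (ipS μ c M N (S (n + 2)) (S (n + 2))) := by
      rw [Asym, hsN_def, Asmul,
        show (1 / Real.sqrt (ipS μ c M N (S (n + 2)) (S (n + 2))))
            * ipS μ c M N (S (n + 2)) (S (n + 2))
          = ipS μ c M N (S (n + 2)) (S (n + 2))
            / Real.sqrt (ipS μ c M N (S (n + 2)) (S (n + 2))) from by ring,
        Real.div_sqrt]
    rw [e1, e2, e3, e4, add_zero,
      show tC μ c M N S (n + 2)
        = 1 / Real.sqrt (ipS μ c M N (S (n + 2)) (S (n + 2))) from rfl,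
      one_div, div_eq_mul_inv, inv_inv]
  have part3 : ∀ n : ℕ, rhoC μ c M N S (n + 1) n
      = gamC μ c M N S P2 n n * gamC μ c M N S P2 n (n + 1)
        + (if 1 ≤ n then gamC μ c M N S P2 (n - 1) n * gamC μ c M N S P2 (n - 1) (n + 1)
           else 0) := by
    intro n
    rw [hrhosymm (n + 1) n, hsum n (n + 1)]
    rcases n with _ | m
    · rw [Finset.sum_range_one]
      simp [mul_comm]
    · rw [Finset.sum_range_succ, Finset.sum_range_succ]
      have hz : ∑ j ∈ Finset.range m,
          gamC μ c M N S P2 j (m + 1 + 1) * gamC μ c M N S P2 j (m + 1) = 0 :=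
        Finset.sum_eq_zero fun j hj => by
          rw [hgamzero j (m + 1 + 1) (by have := Finset.mem_range.1 hj; omega)]; ring
      rw [hz]
      simp only [if_pos (by omega : 1 ≤ m + 1), Nat.add_sub_cancel]
      ring
  have part4 : ∀ n : ℕ, rhoC μ c M N S n n
      = gamC μ c M N S P2 n n ^ 2
        + (if 1 ≤ n then gamC μ c M N S P2 (n - 1) n ^ 2 else 0)
        + (if 2 ≤ n then gamC μ c M N S P2 (n - 2) n ^ 2 else 0) := by
    intro n
    rw [hsum n n]
    rcases n with _ | (_ | m)
    · rw [Finset.sum_range_one]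
      simp [sq]
    · rw [Finset.sum_range_succ, Finset.sum_range_one]
      norm_num
      ring
    · rw [Finset.sum_range_succ, Finset.sum_range_succ, Finset.sum_range_succ]
      have hz : ∑ j ∈ Finset.range m,
          gamC μ c M N S P2 j (m + 2) * gamC μ c M N S P2 j (m + 2) = 0 :=
        Finset.sum_eq_zero fun j hj => by
          rw [hgamzero j (m + 2) (by have := Finset.mem_range.1 hj; omega)]; ring
      rw [hz]
      simp only [if_pos (by omega : 1 ≤ m + 2), if_pos (by omega : 2 ≤ m + 2),
        show m + 2 - 1 = m + 1 from by omega, show m + 2 - 2 = m from by omega]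
      ring
  have part5 : ∀ n : ℕ,
      (X - C c) ^ 2 * sN μ c M N S n
        = C (rhoC μ c M N S (n + 2) n) * sN μ c M N S (n + 2)
          + C (rhoC μ c M N S (n + 1) n) * sN μ c M N S (n + 1)
          + C (rhoC μ c M N S n n) * sN μ c M N S n
          + (if 1 ≤ n then C (rhoC μ c M N S (n - 1) n) * sN μ c M N S (n - 1) else 0)
          + (if 2 ≤ n then C (rhoC μ c M N S (n - 2) n) * sN μ c M N S (n - 2) else 0) := by
    intro n
    have hQdeg : ((X - C c) ^ 2 * sN μ c M N S n).degree < ((n + 3 : ℕ) : WithBot ℕ) := by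
      have hd1 : ((X - C c) ^ 2 * sN μ c M N S n).natDegree ≤ 2 + n := by
        refine le_trans Polynomial.natDegree_mul_le ?_
        have h1 : ((X - C c : Polynomial ℝ) ^ 2).natDegree = 2 := by
          simp [Polynomial.natDegree_pow]
        have h2 : (sN μ c M N S n).natDegree ≤ n := by
          refine le_trans Polynomial.natDegree_mul_le ?_
          simp [Polynomial.natDegree_C, hSd n]
        omega
      calc ((X - C c) ^ 2 * sN μ c M N S n).degree
          ≤ (((X - C c) ^ 2 * sN μ c M N S n).natDegree : WithBot ℕ) :=
            Polynomial.degree_le_natDegree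
        _ ≤ ((2 + n : ℕ) : WithBot ℕ) := by exact_mod_cast hd1
        _ < ((n + 3 : ℕ) : WithBot ℕ) := by exact_mod_cast (by omega : 2 + n < n + 3)
    have h := fourier (ipS μ c M N) Aadd Asmul Asym S hSm hSd hSo hSpos (n + 3) _ hQdeg
    have h' : (X - C c) ^ 2 * sN μ c M N S n
        = ∑ k ∈ Finset.range (n + 3), C (rhoC μ c M N S k n) * sN μ c M N S k := by
      calc (X - C c) ^ 2 * sN μ c M N S n = _ := h
        _ = _ := Finset.sum_congr rfl fun k _ => by rw [← hsN_def k, ← hrho_def k n]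
    rcases n with _ | (_ | m)
    · rw [Finset.sum_range_succ, Finset.sum_range_succ, Finset.sum_range_one] at h'
      rw [h']
      norm_num
      ring
    · rw [Finset.sum_range_succ, Finset.sum_range_succ, Finset.sum_range_succ,
        Finset.sum_range_one] at h'
      rw [h']
      norm_num
      ring
    · rw [Finset.sum_range_succ, Finset.sum_range_succ, Finset.sum_range_succ,
        Finset.sum_range_succ, Finset.sum_range_succ] at h'
      have hz : ∑ k ∈ Finset.range m, C (rhoC μ c M N S k (m + 2)) * sN μ c M N S k = 0 :=
        Finset.sum_eq_zero fun k hk => by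
          rw [part1 k (m + 2) (Or.inl (by have := Finset.mem_range.1 hk; omega))]
          simp
      rw [hz] at h'
      rw [h']
      simp only [if_pos (by omega : 1 ≤ m + 2), if_pos (by omega : 2 ≤ m + 2),
        show m + 2 - 1 = m + 1 from by omega, show m + 2 - 2 = m from by omega]
      ring
  exact ⟨part1, part2, part3, part4, part5⟩
end
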